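/- arXiv:2505.00952 — 6 statements merged into one kernel-verified Lean document; each statement's English description precedes it below -/
import Mathlib

section
/- Let G be a finite group, let A be a simple C*-algebra, and let α : G → Aut(A) be an action of G on A which has the weak tracial Rokhlin property. Then for every ε > 0 and every positive element b ∈ A^α with ‖b‖ = 1, there is a positive element x in the closure of b A b with ‖x‖ = 1 such that ‖x · α_g(x)‖ < ε for all g ∈ G with g ≠ 1. -/
set_option maxHeartbeats 4000000

open Filter Topology

variable {A : Type*} [NonUnitalCStarAlgebra A] [PartialOrder A] [StarOrderedRing A]

/-- `(a - ε)₊`, the positive cut-down of `a`, obtained by applying the continuous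
functional calculus with the function `t ↦ max (t - ε) 0`. -/
noncomputable def cutdown (a : A) (ε : ℝ) : A :=
  cfcₙ (fun t : ℝ => max (t - ε) 0) a

/-- Cuntz subequivalence of `a` and `b`, with the witnessing sequence taken from `S`:
there is a sequence `(w n)` in `S` with `‖w n * b * (w n)⋆ - a‖ → 0`.
Taking `S = Set.univ` gives Cuntz subequivalence in `A`. -/
def CuntzLEIn (S : Set A) (a b : A) : Prop :=
  ∃ w : ℕ → A, (∀ n, w n ∈ S) ∧
    Tendsto (fun n => ‖w n * b * star (w n) - a‖) atTop (𝓝 0)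

/-- A C*-algebra is simple if it is nonzero and its only closed two-sided ideals
are `⊥` and `⊤`. -/
def IsSimpleCStarAlgebra (A : Type*) [NonUnitalCStarAlgebra A] : Prop :=
  (∃ a : A, a ≠ 0) ∧ ∀ I : TwoSidedIdeal A, IsClosed (I : Set A) → I = ⊥ ∨ I = ⊤

/-- The fixed point algebra of an action `α` of `G` on `A`. -/
def fixedPts {G : Type*} (α : G → A ≃⋆ₐ[ℂ] A) : Set A :=
  {a : A | ∀ g : G, α g a = a}

/-- The weak tracial Rokhlin property for an action of a finite group `G` on a simple
C*-algebra `A`: for every `ε > 0`, finite set `F ⊆ A`, and positive `x, y ∈ A` with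
`‖x‖ = 1` there are pairwise orthogonal positive contractions `f g` such that, with
`f = ∑ g, f g`: `f g` almost commutes with `F`, `α g (f h)` is close to `f (g * h)`,
`(y² - y f y - ε)₊ ≾_A x`, and `‖f x f‖ > 1 - ε`. -/
def WeakTracialRokhlin {G : Type*} [Group G] [Fintype G] (α : G → A ≃⋆ₐ[ℂ] A) : Prop :=
  ∀ (ε : ℝ), 0 < ε → ∀ (F : Finset A) (x y : A), 0 ≤ x → 0 ≤ y → ‖x‖ = 1 →
    ∃ f : G → A,
      (∀ g, 0 ≤ f g) ∧ (∀ g, ‖f g‖ ≤ 1) ∧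
      (∀ g h, g ≠ h → f g * f h = 0) ∧
      (∀ g, ∀ a ∈ F, ‖a * f g - f g * a‖ < ε) ∧
      (∀ g h, ‖α g (f h) - f (g * h)‖ < ε) ∧
      CuntzLEIn Set.univ (cutdown (y * y - y * (∑ g : G, f g) * y) ε) x ∧
      ‖(∑ g : G, f g) * x * (∑ g : G, f g)‖ > 1 - ε

section Helpers

private lemma norm_mul_le_one' {B : Type*} [NonUnitalSeminormedRing B] {u v : B}
    (hu : ‖u‖ ≤ 1) (hv : ‖v‖ ≤ 1) : ‖u * v‖ ≤ 1 :=
  le_trans (norm_mul_le u v) (by nlinarith [norm_nonneg u, norm_nonneg v])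

private lemma norm_sandwich_right {B : Type*} [NonUnitalSeminormedRing B] (u d v : B) {c : ℝ}
    (hu : ‖u‖ ≤ 1) (hd : ‖d‖ ≤ c) (hv : ‖v‖ ≤ 1) : ‖u * (d * v)‖ ≤ c := by
  have h0 : 0 ≤ c := le_trans (norm_nonneg d) hd
  calc ‖u * (d * v)‖ ≤ ‖u‖ * ‖d * v‖ := norm_mul_le _ _
    _ ≤ ‖u‖ * (‖d‖ * ‖v‖) := mul_le_mul_of_nonneg_left (norm_mul_le d v) (norm_nonneg u)
    _ ≤ 1 * (c * 1) := by
        refine mul_le_mul hu (mul_le_mul hd hv (norm_nonneg _) h0) (by positivity) zero_le_one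
    _ = c := by ring

private lemma norm_sandwich_left {B : Type*} [NonUnitalSeminormedRing B] (u d v : B) {c : ℝ}
    (hu : ‖u‖ ≤ 1) (hd : ‖d‖ ≤ c) (hv : ‖v‖ ≤ 1) : ‖u * d * v‖ ≤ c := by
  have h0 : 0 ≤ c := le_trans (norm_nonneg d) hd
  calc ‖u * d * v‖ ≤ ‖u * d‖ * ‖v‖ := norm_mul_le _ _
    _ ≤ ‖u‖ * ‖d‖ * ‖v‖ := mul_le_mul_of_nonneg_right (norm_mul_le u d) (norm_nonneg v)
    _ ≤ 1 * c * 1 := by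
        refine mul_le_mul (mul_le_mul hu hd (norm_nonneg _) zero_le_one) hv (norm_nonneg _)
          (by positivity)
    _ = c := by ring

end Helpers

/-- If a finite group action `α` on a simple C*-algebra `A` has the
weak tracial Rokhlin property, then for every `ε > 0` and every positive `b ∈ A^α`
with `‖b‖ = 1`, there is a positive `x` in the closure of `b A b` with `‖x‖ = 1`
such that `‖x * α g x‖ < ε` for all `g ≠ 1`. -/
theorem exists_approx_orthogonal_in_hereditary
    {G : Type*} [Group G] [Fintype G]
    (hA : IsSimpleCStarAlgebra A)
    (α : G → A ≃⋆ₐ[ℂ] A) (hα : ∀ g h x, α (g * h) x = α g (α h x))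
    (hwtrp : WeakTracialRokhlin α)
    (ε : ℝ) (hε : 0 < ε)
    (b : A) (hb : 0 ≤ b) (hb1 : ‖b‖ = 1) (hbfix : b ∈ fixedPts α) :
    ∃ x ∈ closure {z : A | ∃ c : A, z = b * c * b},
      0 ≤ x ∧ ‖x‖ = 1 ∧ ∀ g : G, g ≠ 1 → ‖x * α g x‖ < ε := by
  classical
  have hbsa : star b = b := (IsSelfAdjoint.of_nonneg hb).star_eq
  have hbn : ‖b‖ ≤ 1 := le_of_eq hb1
  set K : ℝ := (Fintype.card G : ℝ) with hKdef
  have hK1 : (1:ℝ) ≤ K := by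
    have := Fintype.card_pos (α := G)
    rw [hKdef]; exact_mod_cast this
  have hK0 : (0:ℝ) < K := lt_of_lt_of_le one_pos hK1
  set δ : ℝ := min (1 / (2*(K+1)^2)) (ε/(128*K^4)) with hδdef
  have hδ0 : 0 < δ := lt_min (by positivity) (by positivity)
  have hδ1 : δ ≤ 1/(2*(K+1)^2) := min_le_left _ _
  have hδ2 : δ ≤ ε/(128*K^4) := min_le_right _ _
  obtain ⟨f, hf0, hfn, horth, hcomm, hequi, -, hbig⟩ :=
    hwtrp δ hδ0 {b} b 0 hb le_rfl hb1
  have hiso : ∀ (g : G) (z : A), ‖α g z‖ = ‖z‖ := fun g z =>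
    NonUnitalStarAlgHom.norm_map (α g) (EquivLike.injective (α g)) z
  have hcommb : ∀ h : G, ‖b * f h - f h * b‖ < δ := fun h =>
    hcomm h b (Finset.mem_singleton_self b)
  -- off-diagonal terms are small
  have hoff : ∀ g h : G, g ≠ h → ‖f g * b * f h‖ ≤ δ := by
    intro g h hgh
    have h2 : f g * f h = 0 := horth g h hgh
    have h1 : f g * b * f h = f g * (b * f h - f h * b) := by
      rw [mul_sub, ← mul_assoc, ← mul_assoc, h2, zero_mul, sub_zero]
    rw [h1]
    calc ‖f g * (b * f h - f h * b)‖ ≤ ‖f g‖ * ‖b * f h - f h * b‖ := norm_mul_le _ _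
      _ ≤ 1 * δ := mul_le_mul (hfn g) (le_of_lt (hcommb h)) (norm_nonneg _) zero_le_one
      _ = δ := one_mul δ
  -- the sum of diagonal norms is large
  have hdiagsum : 1 - δ - K*(K*δ) < ∑ g : G, ‖f g * b * f g‖ := by
    have e1 : (∑ g : G, f g) * b * (∑ g : G, f g) = ∑ g : G, (f g * b * ∑ h : G, f h) := by
      rw [Finset.sum_mul, Finset.sum_mul]
    have e2 : ∀ g : G, ‖f g * b * ∑ h : G, f h‖ ≤ ‖f g * b * f g‖ + K * δ := by
      intro g
      have e3 : f g * b * ∑ h : G, f h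
          = f g * b * f g + ∑ h ∈ Finset.univ.erase g, f g * b * f h := by
        rw [Finset.mul_sum, ← Finset.add_sum_erase Finset.univ (fun h => f g * b * f h)
          (Finset.mem_univ g)]
      rw [e3]
      refine le_trans (norm_add_le _ _) (add_le_add le_rfl ?_)
      calc ‖∑ h ∈ Finset.univ.erase g, f g * b * f h‖
          ≤ ∑ h ∈ Finset.univ.erase g, ‖f g * b * f h‖ := norm_sum_le _ _
        _ ≤ ∑ _h ∈ Finset.univ.erase g, δ := Finset.sum_le_sum fun h hh =>
            hoff g h (Finset.ne_of_mem_erase hh).symm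
        _ = ((Finset.univ.erase g).card : ℝ) * δ := by rw [Finset.sum_const, nsmul_eq_mul]
        _ ≤ K * δ := by
            refine mul_le_mul_of_nonneg_right ?_ (le_of_lt hδ0)
            rw [hKdef]
            exact_mod_cast Finset.card_le_univ _
    have e4 : 1 - δ < ∑ g : G, (‖f g * b * f g‖ + K * δ) := by
      calc 1 - δ < ‖(∑ g : G, f g) * b * (∑ g : G, f g)‖ := hbig
        _ = ‖∑ g : G, (f g * b * ∑ h : G, f h)‖ := by rw [e1]
        _ ≤ ∑ g : G, ‖f g * b * ∑ h : G, f h‖ := norm_sum_le _ _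
        _ ≤ ∑ g : G, (‖f g * b * f g‖ + K * δ) := Finset.sum_le_sum fun g _ => e2 g
    have e5 : ∑ g : G, (‖f g * b * f g‖ + K * δ)
        = (∑ g : G, ‖f g * b * f g‖) + K * (K * δ) := by
      rw [Finset.sum_add_distrib, Finset.sum_const, Finset.card_univ, nsmul_eq_mul, ← hKdef]
    rw [e5] at e4
    linarith
  -- pick a large diagonal element
  obtain ⟨g₀, hg₀⟩ : ∃ g₀ : G, (1 - δ - K*(K*δ))/K < ‖f g₀ * b * f g₀‖ := by
    by_contra hcon
    push_neg at hcon
    have h6 : ∑ g : G, ‖f g * b * f g‖ ≤ ∑ _g : G, (1 - δ - K*(K*δ))/K :=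
      Finset.sum_le_sum fun g _ => hcon g
    rw [Finset.sum_const, Finset.card_univ, nsmul_eq_mul, ← hKdef] at h6
    have h7 : K * ((1 - δ - K*(K*δ))/K) = 1 - δ - K*(K*δ) := by field_simp
    rw [h7] at h6
    linarith
  -- transport to f 1
  set v : A := α g₀⁻¹ (f g₀) with hv
  have hv1 : ‖v - f 1‖ < δ := by
    have h8 := hequi g₀⁻¹ g₀
    rwa [inv_mul_cancel] at h8
  have hvb : ‖v * b * v‖ = ‖f g₀ * b * f g₀‖ := by
    have h9 : α g₀⁻¹ (f g₀ * b * f g₀) = v * b * v := by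
      rw [map_mul, map_mul, hbfix g₀⁻¹]
    rw [← h9, hiso]
  have hvn : ‖v‖ ≤ 1 := by rw [hv, hiso]; exact hfn g₀
  have hf1n : ‖f 1‖ ≤ 1 := hfn 1
  have hdiff : ‖v * b * v - f 1 * b * f 1‖ ≤ 2*δ := by
    have e : v * b * v - f 1 * b * f 1 = (v - f 1) * (b * v) + (f 1 * b) * (v - f 1) := by
      noncomm_ring
    rw [e]
    have b1 : ‖(v - f 1) * (b * v)‖ ≤ δ :=
      le_trans (norm_mul_le _ _) (by
        have := norm_mul_le_one' hbn hvn
        nlinarith [norm_nonneg (v - f 1), norm_nonneg (b * v), hv1.le])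
    have b2 : ‖(f 1 * b) * (v - f 1)‖ ≤ δ :=
      le_trans (norm_mul_le _ _) (by
        have := norm_mul_le_one' hf1n hbn
        nlinarith [norm_nonneg (v - f 1), norm_nonneg (f 1 * b), hv1.le])
    calc ‖(v - f 1) * (b * v) + (f 1 * b) * (v - f 1)‖
        ≤ ‖(v - f 1) * (b * v)‖ + ‖(f 1 * b) * (v - f 1)‖ := norm_add_le _ _
      _ ≤ 2*δ := by linarith
  have hf1b : (1 - δ - K*(K*δ))/K - 2*δ < ‖f 1 * b * f 1‖ := by
    have := norm_sub_norm_le (v * b * v) (f 1 * b * f 1)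
    linarith [hvb ▸ hg₀]
  -- numeric lower bound
  have hlow : 1/(2*K) ≤ (1 - δ - K*(K*δ))/K - 2*δ := by
    have h1 : δ * (K+1)^2 ≤ 1/2 := by
      calc δ * (K+1)^2 ≤ (1/(2*(K+1)^2)) * (K+1)^2 :=
          mul_le_mul_of_nonneg_right hδ1 (by positivity)
        _ = 1/2 := by field_simp
    have e : (1 - δ - K*(K*δ))/K - 2*δ = (1 - δ - K*K*δ - 2*δ*K)/K := by
      field_simp
    rw [e]
    rw [div_le_div_iff₀ (by positivity) hK0]
    nlinarith [hδ0.le, hK0.le]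
  have hp : 1/(2*K) < ‖f 1 * b * f 1‖ := lt_of_le_of_lt hlow hf1b
  -- the candidate element
  set x₀ : A := b * (f 1 * f 1) * b with hx₀
  have hf1sa : star (f 1) = f 1 := (IsSelfAdjoint.of_nonneg (hf0 1)).star_eq
  have hx₀star : b * (f 1 * f 1) * b = star (f 1 * b) * (f 1 * b) := by
    rw [star_mul, hbsa, hf1sa]; noncomm_ring
  have hx₀pos : (0:A) ≤ x₀ := by rw [hx₀, hx₀star]; exact star_mul_self_nonneg _
  have hpsa : star (f 1 * b * f 1) = f 1 * b * f 1 := by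
    rw [star_mul, star_mul, hbsa, hf1sa, mul_assoc]
  have hpsq : ‖f 1 * b * f 1‖ * ‖f 1 * b * f 1‖ ≤ ‖x₀‖ := by
    have hsq : ‖(f 1 * b * f 1) * (f 1 * b * f 1)‖ = ‖f 1 * b * f 1‖ * ‖f 1 * b * f 1‖ := by
      rw [← CStarRing.norm_star_mul_self, hpsa]
    have e : (f 1 * b * f 1) * (f 1 * b * f 1) = f 1 * (b * (f 1 * f 1) * b) * f 1 := by
      noncomm_ring
    rw [← hsq, e, ← hx₀]
    exact norm_sandwich_left (f 1) x₀ (f 1) hf1n le_rfl hf1n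
  have hx₀lb : 1/(2*K) * (1/(2*K)) < ‖x₀‖ :=
    lt_of_lt_of_le (mul_lt_mul'' hp hp (by positivity) (by positivity)) hpsq
  have hx₀pos' : (0:ℝ) < ‖x₀‖ := lt_of_le_of_lt (by positivity) hx₀lb
  -- approximate orthogonality of x₀ and α g x₀
  have hxoab : ∀ g : G, g ≠ 1 → ‖x₀ * α g x₀‖ ≤ 3*δ := by
    intro g hg
    set w : A := α g (f 1) with hw
    have hwn : ‖w‖ ≤ 1 := by rw [hw, hiso]; exact hfn 1
    have hwfg : ‖w - f g‖ < δ := by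
      have := hequi g 1
      rwa [mul_one] at this
    have hαx₀ : α g x₀ = b * (w * w) * b := by
      rw [hx₀, map_mul, map_mul, map_mul, hbfix g]
    have horth1g : f 1 * (f 1 * f g) = 0 := by rw [horth 1 g (Ne.symm hg), mul_zero]
    have key : x₀ * α g x₀ =
        (b * (f 1 * f 1) * (b * b)) * ((w - f g) * (w * b))
        + (b * (f 1 * f 1) * b) * ((b * f g - f g * b) * (w * b))
        + (b * (f 1 * f 1)) * ((b * f g - f g * b) * (b * (w * b)))
        + b * ((f 1 * (f 1 * f g)) * (b * (b * (w * b)))) := by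
      rw [hαx₀, hx₀]; noncomm_ring
    rw [key, horth1g, zero_mul, mul_zero, add_zero]
    have hbb : ‖b * b‖ ≤ 1 := norm_mul_le_one' hbn hbn
    have hff : ‖f 1 * f 1‖ ≤ 1 := norm_mul_le_one' hf1n hf1n
    have hwb : ‖w * b‖ ≤ 1 := norm_mul_le_one' hwn hbn
    have t1 : ‖(b * (f 1 * f 1) * (b * b)) * ((w - f g) * (w * b))‖ ≤ δ := by
      refine norm_sandwich_right _ _ _ ?_ hwfg.le hwb
      exact norm_mul_le_one' (norm_mul_le_one' hbn hff) hbb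
    have t2 : ‖(b * (f 1 * f 1) * b) * ((b * f g - f g * b) * (w * b))‖ ≤ δ := by
      refine norm_sandwich_right _ _ _ ?_ (hcommb g).le hwb
      exact norm_mul_le_one' (norm_mul_le_one' hbn hff) hbn
    have t3 : ‖(b * (f 1 * f 1)) * ((b * f g - f g * b) * (b * (w * b)))‖ ≤ δ := by
      refine norm_sandwich_right _ _ _ ?_ (hcommb g).le ?_
      · exact norm_mul_le_one' hbn hff
      · exact norm_mul_le_one' hbn hwb
    exact le_trans (norm_add_le _ _) (by linarith [le_trans (norm_add_le
      ((b * (f 1 * f 1) * (b * b)) * ((w - f g) * (w * b)))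
      ((b * (f 1 * f 1) * b) * ((b * f g - f g * b) * (w * b)))) (add_le_add t1 t2)])
  -- assemble the answer
  set r : ℝ := ‖x₀‖⁻¹ with hr
  have hr0 : 0 < r := inv_pos.mpr hx₀pos'
  have hrle : r ≤ 4*K^2 := by
    have h1 : (0:ℝ) < 1/(2*K) * (1/(2*K)) := by positivity
    have h2 : r ≤ (1/(2*K) * (1/(2*K)))⁻¹ := by
      rw [hr]
      exact inv_anti₀ h1 hx₀lb.le
    have h3 : (1/(2*K) * (1/(2*K)))⁻¹ = 4*K^2 := by
      field_simp; ring
    rw [h3] at h2; exact h2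
  refine ⟨(r : ℂ) • x₀, ?_, ?_, ?_, ?_⟩
  · apply subset_closure
    refine ⟨(r:ℂ) • (f 1 * f 1), ?_⟩
    rw [mul_smul_comm, smul_mul_assoc, ← hx₀]
  · rw [Complex.coe_smul]
    exact smul_nonneg hr0.le hx₀pos
  · rw [norm_smul, Complex.norm_real, Real.norm_eq_abs, abs_of_pos hr0, hr,
      inv_mul_cancel₀ (ne_of_gt hx₀pos')]
  · intro g hg
    have e : ((r:ℂ) • x₀) * α g ((r:ℂ) • x₀) = ((r:ℂ)*(r:ℂ)) • (x₀ * α g x₀) := by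
      rw [map_smul, smul_mul_assoc, mul_smul_comm, smul_smul]
    rw [e, norm_smul]
    have hnr : ‖(r:ℂ)*(r:ℂ)‖ = r * r := by
      rw [norm_mul, Complex.norm_real, Real.norm_eq_abs, abs_of_pos hr0]
    rw [hnr]
    have h1 : r * r * ‖x₀ * α g x₀‖ ≤ (4*K^2) * (4*K^2) * (3*δ) :=
      mul_le_mul (mul_le_mul hrle hrle hr0.le (by positivity)) (hxoab g hg)
        (norm_nonneg _) (by positivity)
    have h2 : (4*K^2) * (4*K^2) * (3*δ) ≤ 48*K^4*(ε/(128*K^4)) := by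
      nlinarith [mul_le_mul_of_nonneg_left hδ2 (show (0:ℝ) ≤ 48*K^4 by positivity)]
    have h3 : 48*K^4*(ε/(128*K^4)) = (3/8)*ε := by
      field_simp; ring
    rw [h3] at h2
    linarith
end

section
/- Let f, g : [0, ∞) → [0, ∞) be continuous functions with f(0) = g(0) = 0, let M > 0, and let ε > 0. Then there is δ > 0 such that for every C*-algebra A and all positive elements a, b ∈ A with ‖a‖ ≤ M, ‖b‖ ≤ M, and ‖a b − b a‖ < δ, one has ‖f(a) g(b) − g(b) f(a)‖ < ε. -/
universe u

/-- `nupow a n` is morally `a ^ (n+1)` in a non-unital algebra. -/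
def nupow {A : Type u} [Mul A] (a : A) : ℕ → A
  | 0 => a
  | (n+1) => nupow a n * a

lemma norm_nupow_le {A : Type u} [NonUnitalCStarAlgebra A] (a : A) (n : ℕ) :
    ‖nupow a n‖ ≤ ‖a‖ ^ (n+1) := by
  induction n with
  | zero => simp [nupow]
  | succ n ih =>
    calc ‖nupow a (n+1)‖ ≤ ‖nupow a n‖ * ‖a‖ := norm_mul_le _ _
      _ ≤ ‖a‖ ^ (n+1) * ‖a‖ := by gcongr
      _ = ‖a‖ ^ (n+2) := by ring

lemma comm_nupow_right {A : Type u} [NonUnitalCStarAlgebra A] (a b : A) (n : ℕ) :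
    ‖a * nupow b n - nupow b n * a‖ ≤ ((n:ℝ)+1) * ‖b‖ ^ n * ‖a * b - b * a‖ := by
  induction n with
  | zero => simp [nupow]
  | succ n ih =>
    have key : a * nupow b (n+1) - nupow b (n+1) * a
        = (a * nupow b n - nupow b n * a) * b + nupow b n * (a * b - b * a) := by
      show a * (nupow b n * b) - (nupow b n * b) * a = _
      noncomm_ring
    calc ‖a * nupow b (n+1) - nupow b (n+1) * a‖
        ≤ ‖(a * nupow b n - nupow b n * a) * b‖ + ‖nupow b n * (a * b - b * a)‖ := by
          rw [key]; exact norm_add_le _ _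
      _ ≤ ‖a * nupow b n - nupow b n * a‖ * ‖b‖ + ‖nupow b n‖ * ‖a * b - b * a‖ :=
          add_le_add (norm_mul_le _ _) (norm_mul_le _ _)
      _ ≤ (((n:ℝ)+1) * ‖b‖ ^ n * ‖a * b - b * a‖) * ‖b‖ + ‖b‖ ^ (n+1) * ‖a * b - b * a‖ := by
          gcongr
          exact norm_nupow_le b n
      _ = (((n+1:ℕ):ℝ)+1) * ‖b‖ ^ (n+1) * ‖a * b - b * a‖ := by push_cast; ring

lemma comm_nupow_nupow {A : Type u} [NonUnitalCStarAlgebra A] (a b : A) (m n : ℕ) :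
    ‖nupow a m * nupow b n - nupow b n * nupow a m‖
      ≤ ((m:ℝ)+1) * ‖a‖ ^ m * (((n:ℝ)+1) * ‖b‖ ^ n * ‖a * b - b * a‖) := by
  have h1 := comm_nupow_right (nupow b n) a m
  rw [norm_sub_rev, norm_sub_rev (nupow b n * a)] at h1
  calc ‖nupow a m * nupow b n - nupow b n * nupow a m‖
      ≤ ((m:ℝ)+1) * ‖a‖ ^ m * ‖a * nupow b n - nupow b n * a‖ := h1
    _ ≤ ((m:ℝ)+1) * ‖a‖ ^ m * (((n:ℝ)+1) * ‖b‖ ^ n * ‖a * b - b * a‖) := by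
        gcongr
        exact comm_nupow_right a b n

open Finset in
lemma comm_sum_sum {A : Type u} [NonUnitalCStarAlgebra A] (a b : A) (c d : ℕ → ℝ)
    (m n : ℕ) (M : ℝ) (ha : ‖a‖ ≤ M) (hb : ‖b‖ ≤ M) :
    ‖(∑ i ∈ range m, c i • nupow a i) * (∑ j ∈ range n, d j • nupow b j)
      - (∑ j ∈ range n, d j • nupow b j) * (∑ i ∈ range m, c i • nupow a i)‖
      ≤ (∑ i ∈ range m, |c i| * ((i:ℝ)+1) * M ^ i)
        * (∑ j ∈ range n, |d j| * ((j:ℝ)+1) * M ^ j) * ‖a * b - b * a‖ := by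
  have hMa : 0 ≤ M := (norm_nonneg a).trans ha
  have expand : (∑ i ∈ range m, c i • nupow a i) * (∑ j ∈ range n, d j • nupow b j)
      - (∑ j ∈ range n, d j • nupow b j) * (∑ i ∈ range m, c i • nupow a i)
      = ∑ i ∈ range m, ∑ j ∈ range n,
          (c i * d j) • (nupow a i * nupow b j - nupow b j * nupow a i) := by
    rw [Finset.sum_mul_sum, Finset.sum_mul_sum, Finset.sum_comm (s := range n)]
    rw [← Finset.sum_sub_distrib]
    refine Finset.sum_congr rfl fun i _ => ?_
    rw [← Finset.sum_sub_distrib]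
    refine Finset.sum_congr rfl fun j _ => ?_
    rw [smul_mul_assoc, smul_mul_assoc, mul_smul_comm, mul_smul_comm, smul_smul, smul_smul,
      mul_comm (d j) (c i), ← smul_sub]
  rw [expand]
  have key : ∀ i ∈ range m, ‖∑ j ∈ range n,
      (c i * d j) • (nupow a i * nupow b j - nupow b j * nupow a i)‖
      ≤ ∑ j ∈ range n, (|c i| * ((i:ℝ)+1) * M ^ i)
          * ((|d j| * ((j:ℝ)+1) * M ^ j) * ‖a * b - b * a‖) := by
    intro i _
    refine (norm_sum_le _ _).trans (Finset.sum_le_sum fun j _ => ?_)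
    calc ‖(c i * d j) • (nupow a i * nupow b j - nupow b j * nupow a i)‖
        = |c i| * |d j| * ‖nupow a i * nupow b j - nupow b j * nupow a i‖ := by
          rw [norm_smul, Real.norm_eq_abs, abs_mul]
      _ ≤ |c i| * |d j| * (((i:ℝ)+1) * ‖a‖ ^ i * (((j:ℝ)+1) * ‖b‖ ^ j * ‖a * b - b * a‖)) := by
          gcongr
          exact comm_nupow_nupow a b i j
      _ ≤ |c i| * |d j| * (((i:ℝ)+1) * M ^ i * (((j:ℝ)+1) * M ^ j * ‖a * b - b * a‖)) := by
          gcongr <;> exact norm_nonneg _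
      _ = (|c i| * ((i:ℝ)+1) * M ^ i) * ((|d j| * ((j:ℝ)+1) * M ^ j) * ‖a * b - b * a‖) := by
          ring
  calc ‖∑ i ∈ range m, ∑ j ∈ range n,
        (c i * d j) • (nupow a i * nupow b j - nupow b j * nupow a i)‖
      ≤ ∑ i ∈ range m, ∑ j ∈ range n, (|c i| * ((i:ℝ)+1) * M ^ i)
          * ((|d j| * ((j:ℝ)+1) * M ^ j) * ‖a * b - b * a‖) :=
        (norm_sum_le _ _).trans (Finset.sum_le_sum key)
    _ = (∑ i ∈ range m, |c i| * ((i:ℝ)+1) * M ^ i)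
        * (∑ j ∈ range n, |d j| * ((j:ℝ)+1) * M ^ j) * ‖a * b - b * a‖ := by
        simp_rw [Finset.sum_mul, Finset.mul_sum, mul_assoc]
        exact Finset.sum_congr rfl fun i _ => by
          rw [Finset.sum_mul]
          exact Finset.sum_congr rfl fun j _ => by ring

section CFCAux

variable {A : Type u} [NonUnitalCStarAlgebra A] [PartialOrder A] [StarOrderedRing A]

omit [PartialOrder A] [StarOrderedRing A] in
lemma cfcₙ_pow_succ (a : A) (ha : IsSelfAdjoint a) (n : ℕ) :
    cfcₙ (fun x : ℝ => x ^ (n+1)) a = nupow a n := by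
  induction n with
  | zero => simpa [nupow] using cfcₙ_id' ℝ a
  | succ n ih =>
    have : (fun x : ℝ => x ^ (n+2)) = fun x : ℝ => x ^ (n+1) * x := by
      ext x; ring
    rw [this, cfcₙ_mul _ _ a (by fun_prop) (by simp) (by fun_prop) (by simp), ih, cfcₙ_id' ℝ a]
    rfl

lemma quasispectrum_subset_Icc (a : A) (ha : 0 ≤ a) :
    quasispectrum ℝ a ⊆ Set.Icc 0 ‖a‖ := by
  intro x hx
  refine ⟨quasispectrum_nonneg_of_nonneg a ha x hx, ?_⟩
  have h := QuasispectrumRestricts.nnreal_of_nonneg ha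
  have := (QuasispectrumRestricts.le_nnreal_iff h (r := ‖a‖₊)).mp
    (fun y hy => CStarAlgebra.le_nnnorm_of_mem_quasispectrum hy) x hx
  simpa using this

open Finset in
lemma cfcₙ_poly_sum (a : A) (ha : 0 ≤ a) (c : ℕ → ℝ) (m : ℕ) :
    cfcₙ (fun x : ℝ => ∑ i ∈ range m, c i * x ^ (i+1)) a
      = ∑ i ∈ range m, c i • nupow a i := by
  have hsa : IsSelfAdjoint a := ha.isSelfAdjoint
  have hfun : (fun x : ℝ => ∑ i ∈ range m, c i * x ^ (i+1))
      = ∑ i ∈ range m, (fun x : ℝ => c i * x ^ (i+1)) := by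
    ext x; simp
  rw [hfun, cfcₙ_sum _ a _ (fun i _ => by fun_prop) (fun i _ => by simp)]
  refine Finset.sum_congr rfl fun i _ => ?_
  rw [cfcₙ_const_mul _ _ a (by fun_prop) (by simp), cfcₙ_pow_succ a hsa i]

end CFCAux

set_option maxHeartbeats 2000000 in
open Finset in
/-- Let `f, g : [0, ∞) → [0, ∞)` be continuous with `f 0 = g 0 = 0`,
let `M > 0`, and let `ε > 0`.  Then there is `δ > 0`, uniform over all C*-algebras `A`,
such that whenever `a, b ∈ A` are positive with `‖a‖ ≤ M`, `‖b‖ ≤ M` and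
`‖a * b - b * a‖ < δ`, one has `‖f(a) * g(b) - g(b) * f(a)‖ < ε`, where `f(a)` and
`g(b)` are defined via the non-unital continuous functional calculus. -/
theorem exists_delta_commutator_cfc
    (f g : ℝ → ℝ)
    (hf : ContinuousOn f (Set.Ici 0)) (hg : ContinuousOn g (Set.Ici 0))
    (hf0 : f 0 = 0) (hg0 : g 0 = 0)
    (hfpos : ∀ t, 0 ≤ t → 0 ≤ f t) (hgpos : ∀ t, 0 ≤ t → 0 ≤ g t)
    (M : ℝ) (hM : 0 < M) (ε : ℝ) (hε : 0 < ε) :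
    ∃ δ : ℝ, 0 < δ ∧
      ∀ (A : Type u) [NonUnitalCStarAlgebra A] [PartialOrder A] [StarOrderedRing A],
        ∀ a b : A, 0 ≤ a → 0 ≤ b → ‖a‖ ≤ M → ‖b‖ ≤ M → ‖a * b - b * a‖ < δ →
          ‖cfcₙ f a * cfcₙ g b - cfcₙ g b * cfcₙ f a‖ < ε := by
  have hIcc : Set.Icc (0:ℝ) M ⊆ Set.Ici 0 := fun x hx => hx.1
  have hfM : ContinuousOn f (Set.Icc 0 M) := hf.mono hIcc
  have hgM : ContinuousOn g (Set.Icc 0 M) := hg.mono hIcc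
  obtain ⟨Fb, hFb⟩ := isCompact_Icc.exists_bound_of_continuousOn hfM
  obtain ⟨Gb, hGb⟩ := isCompact_Icc.exists_bound_of_continuousOn hgM
  have h0M : (0:ℝ) ∈ Set.Icc (0:ℝ) M := ⟨le_refl 0, hM.le⟩
  have hFb0 : 0 ≤ Fb := (norm_nonneg (f 0)).trans (hFb 0 h0M)
  have hGb0 : 0 ≤ Gb := (norm_nonneg (g 0)).trans (hGb 0 h0M)
  set η := min 1 (ε / (8 * (Fb + Gb + 2))) with hηdef
  have hη0 : 0 < η := lt_min one_pos (by positivity)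
  have hη1 : η ≤ 1 := min_le_left _ _
  have hη2 : η ≤ ε / (8 * (Fb + Gb + 2)) := min_le_right _ _
  obtain ⟨p, hp⟩ := exists_polynomial_near_of_continuousOn 0 M f hfM η hη0
  obtain ⟨q, hq⟩ := exists_polynomial_near_of_continuousOn 0 M g hgM η hη0
  set cp : ℕ → ℝ := fun i => p.coeff (i+1) with hcp
  set cq : ℕ → ℝ := fun j => q.coeff (j+1) with hcq
  set mp := p.natDegree
  set mq := q.natDegree
  set pf : ℝ → ℝ := fun x => ∑ i ∈ range mp, cp i * x ^ (i+1) with hpfdef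
  set qf : ℝ → ℝ := fun x => ∑ j ∈ range mq, cq j * x ^ (j+1) with hqfdef
  have hpf_eval : ∀ x : ℝ, pf x = p.eval x - p.coeff 0 := by
    intro x
    rw [hpfdef]
    simp only
    rw [Polynomial.eval_eq_sum_range, Finset.sum_range_succ']
    simp [hcp]
    rfl
  have hqf_eval : ∀ x : ℝ, qf x = q.eval x - q.coeff 0 := by
    intro x
    rw [hqfdef]
    simp only
    rw [Polynomial.eval_eq_sum_range, Finset.sum_range_succ']
    simp [hcq]
    rfl
  have hpc0 : |p.coeff 0| < η := by
    have := hp 0 h0M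
    simpa [hf0, Polynomial.coeff_zero_eq_eval_zero] using this
  have hqc0 : |q.coeff 0| < η := by
    have := hq 0 h0M
    simpa [hg0, Polynomial.coeff_zero_eq_eval_zero] using this
  have hpf_close : ∀ x ∈ Set.Icc (0:ℝ) M, |f x - pf x| ≤ 2 * η := by
    intro x hx
    rw [hpf_eval]
    have h1 := hp x hx
    have h2 : f x - (p.eval x - p.coeff 0) = -(p.eval x - f x) + p.coeff 0 := by ring
    rw [h2]
    calc |(-(p.eval x - f x)) + p.coeff 0| ≤ |(-(p.eval x - f x))| + |p.coeff 0| := abs_add_le _ _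
      _ = |p.eval x - f x| + |p.coeff 0| := by rw [abs_neg]
      _ ≤ 2 * η := by linarith
  have hqf_close : ∀ x ∈ Set.Icc (0:ℝ) M, |g x - qf x| ≤ 2 * η := by
    intro x hx
    rw [hqf_eval]
    have h1 := hq x hx
    have h2 : g x - (q.eval x - q.coeff 0) = -(q.eval x - g x) + q.coeff 0 := by ring
    rw [h2]
    calc |(-(q.eval x - g x)) + q.coeff 0| ≤ |(-(q.eval x - g x))| + |q.coeff 0| := abs_add_le _ _
      _ = |q.eval x - g x| + |q.coeff 0| := by rw [abs_neg]
      _ ≤ 2 * η := by linarith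
  set Kp := ∑ i ∈ range mp, |cp i| * ((i:ℝ)+1) * M ^ i with hKp
  set Kq := ∑ j ∈ range mq, |cq j| * ((j:ℝ)+1) * M ^ j with hKq
  have hKp0 : 0 ≤ Kp := Finset.sum_nonneg fun i _ => by positivity
  have hKq0 : 0 ≤ Kq := Finset.sum_nonneg fun j _ => by positivity
  set K := Kp * Kq with hK
  have hK0 : 0 ≤ K := mul_nonneg hKp0 hKq0
  refine ⟨ε / (2 * (K + 1)), by positivity, ?_⟩
  intro A _ _ _ a b ha hb haM hbM hab
  have hsa : IsSelfAdjoint a := ha.isSelfAdjoint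
  have hsb : IsSelfAdjoint b := hb.isSelfAdjoint
  have hspec_a : quasispectrum ℝ a ⊆ Set.Icc 0 M :=
    (quasispectrum_subset_Icc a ha).trans (Set.Icc_subset_Icc_right haM)
  have hspec_b : quasispectrum ℝ b ⊆ Set.Icc 0 M :=
    (quasispectrum_subset_Icc b hb).trans (Set.Icc_subset_Icc_right hbM)
  have hconta : ContinuousOn f (quasispectrum ℝ a) := hfM.mono hspec_a
  have hcontb : ContinuousOn g (quasispectrum ℝ b) := hgM.mono hspec_b
  have hpf0 : pf 0 = 0 := by simp [hpfdef]
  have hqf0 : qf 0 = 0 := by simp [hqfdef]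
  have hpfc : ContinuousOn pf (quasispectrum ℝ a) := by fun_prop
  have hqfc : ContinuousOn qf (quasispectrum ℝ b) := by fun_prop
  -- error bounds
  have hE1 : ‖cfcₙ f a - cfcₙ pf a‖ ≤ 2 * η := by
    rw [← cfcₙ_sub f pf a hconta hf0 hpfc hpf0]
    refine norm_cfcₙ_le (𝕜 := ℝ) fun x hx => ?_
    simpa [Real.norm_eq_abs] using hpf_close x (hspec_a hx)
  have hE2 : ‖cfcₙ g b - cfcₙ qf b‖ ≤ 2 * η := by
    rw [← cfcₙ_sub g qf b hcontb hg0 hqfc hqf0]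
    refine norm_cfcₙ_le (𝕜 := ℝ) fun x hx => ?_
    simpa [Real.norm_eq_abs] using hqf_close x (hspec_b hx)
  have hnFa : ‖cfcₙ f a‖ ≤ Fb := norm_cfcₙ_le fun x hx => hFb x (hspec_a hx)
  have hnQb : ‖cfcₙ qf b‖ ≤ Gb + 2 * η := by
    refine norm_cfcₙ_le (𝕜 := ℝ) fun x hx => ?_
    have h1 := hqf_close x (hspec_b hx)
    have h2 := hGb x (hspec_b hx)
    rw [Real.norm_eq_abs] at h2 ⊢
    calc |qf x| = |g x - (g x - qf x)| := by ring_nf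
      _ ≤ |g x| + |g x - qf x| := abs_sub _ _
      _ ≤ Gb + 2 * η := add_le_add h2 h1
  -- the polynomial parts
  have hPa : cfcₙ pf a = ∑ i ∈ range mp, cp i • nupow a i := cfcₙ_poly_sum a ha cp mp
  have hQb : cfcₙ qf b = ∑ j ∈ range mq, cq j • nupow b j := cfcₙ_poly_sum b hb cq mq
  have hT1 : ‖cfcₙ pf a * cfcₙ qf b - cfcₙ qf b * cfcₙ pf a‖ ≤ K * ‖a * b - b * a‖ := by
    rw [hPa, hQb]
    exact comm_sum_sum a b cp cq mp mq M haM hbM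
  -- commutator norm helper
  have comm_norm : ∀ x y : A, ‖x * y - y * x‖ ≤ 2 * (‖x‖ * ‖y‖) := by
    intro x y
    calc ‖x * y - y * x‖ ≤ ‖x * y‖ + ‖y * x‖ := norm_sub_le _ _
      _ ≤ ‖x‖ * ‖y‖ + ‖y‖ * ‖x‖ := add_le_add (norm_mul_le _ _) (norm_mul_le _ _)
      _ = 2 * (‖x‖ * ‖y‖) := by ring
  have decomp : cfcₙ f a * cfcₙ g b - cfcₙ g b * cfcₙ f a
      = (cfcₙ pf a * cfcₙ qf b - cfcₙ qf b * cfcₙ pf a)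
        + ((cfcₙ f a - cfcₙ pf a) * cfcₙ qf b - cfcₙ qf b * (cfcₙ f a - cfcₙ pf a))
        + (cfcₙ f a * (cfcₙ g b - cfcₙ qf b) - (cfcₙ g b - cfcₙ qf b) * cfcₙ f a) := by
    noncomm_ring
  have hT2 : ‖(cfcₙ f a - cfcₙ pf a) * cfcₙ qf b - cfcₙ qf b * (cfcₙ f a - cfcₙ pf a)‖
      ≤ 2 * ((2 * η) * (Gb + 2 * η)) := by
    refine (comm_norm _ _).trans ?_
    gcongr
  have hT3 : ‖cfcₙ f a * (cfcₙ g b - cfcₙ qf b) - (cfcₙ g b - cfcₙ qf b) * cfcₙ f a‖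
      ≤ 2 * (Fb * (2 * η)) := by
    refine (comm_norm _ _).trans ?_
    gcongr
  -- numeric estimates
  have herr : 2 * ((2 * η) * (Gb + 2 * η)) + 2 * (Fb * (2 * η)) ≤ ε / 2 := by
    have h1 : 2 * ((2 * η) * (Gb + 2 * η)) + 2 * (Fb * (2 * η)) ≤ η * (4 * (Fb + Gb + 2)) := by
      nlinarith [hη0.le, hη1, hFb0, hGb0]
    have h2 : η * (4 * (Fb + Gb + 2)) ≤ ε / 2 := by
      calc η * (4 * (Fb + Gb + 2)) ≤ (ε / (8 * (Fb + Gb + 2))) * (4 * (Fb + Gb + 2)) := by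
            gcongr
        _ = ε / 2 := by field_simp; ring
    linarith
  have hmain : K * ‖a * b - b * a‖ < ε / 2 := by
    have hK1 : (0:ℝ) < K + 1 := by linarith
    calc K * ‖a * b - b * a‖ ≤ K * (ε / (2 * (K + 1))) := by
          exact mul_le_mul_of_nonneg_left hab.le hK0
      _ < ε / 2 := by
          have heq : K * (ε / (2 * (K + 1))) = (K * ε) / (2 * (K + 1)) := by ring
          rw [heq, div_lt_div_iff₀ (by positivity) two_pos]
          nlinarith
  calc ‖cfcₙ f a * cfcₙ g b - cfcₙ g b * cfcₙ f a‖
      ≤ ‖cfcₙ pf a * cfcₙ qf b - cfcₙ qf b * cfcₙ pf a‖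
        + ‖(cfcₙ f a - cfcₙ pf a) * cfcₙ qf b - cfcₙ qf b * (cfcₙ f a - cfcₙ pf a)‖
        + ‖cfcₙ f a * (cfcₙ g b - cfcₙ qf b) - (cfcₙ g b - cfcₙ qf b) * cfcₙ f a‖ := by
        rw [decomp]
        exact (norm_add_le _ _).trans (add_le_add_left (norm_add_le _ _) _)
    _ < ε := by
        have := hT1
        linarith [hT2, hT3, herr, hmain]
end

section
/- Let f, g : [0, ∞) → [0, ∞) be continuous functions with f(0) = g(0) = 0, let ε > 0, and let M > 0. Then there is δ > 0 such that for every C*-algebra A and all positive elements c, d ∈ A with ‖c‖ ≤ M, ‖d‖ ≤ M, and ‖c d − d c‖ < δ, one has ‖(f(d) g(c) f(d))^{1/2} − f(d)^{1/2} g(c)^{1/2} f(d)^{1/2}‖ < ε. -/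
universe u

namespace SqrtCommAux

open Set Polynomial

/-! ### Powers in a non-unital algebra -/

variable {A : Type*} [NonUnitalCStarAlgebra A]

/-- `npw a n = a ^ (n+1)` in a non-unital ring. -/
def npw (a : A) : ℕ → A
  | 0 => a
  | n + 1 => a * npw a n

lemma norm_npw_le (a : A) (n : ℕ) : ‖npw a n‖ ≤ ‖a‖ ^ (n + 1) := by
  induction n with
  | zero => simp [npw]
  | succ n ih =>
    calc ‖npw a (n+1)‖ ≤ ‖a‖ * ‖npw a n‖ := norm_mul_le _ _
    _ ≤ ‖a‖ * ‖a‖ ^ (n+1) := mul_le_mul_of_nonneg_left ih (norm_nonneg a)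
    _ = ‖a‖ ^ (n+2) := by ring

lemma norm_npw_le_of (a : A) {K : ℝ} (hK : ‖a‖ ≤ K) (n : ℕ) : ‖npw a n‖ ≤ K ^ (n + 1) :=
  (norm_npw_le a n).trans (pow_le_pow_left₀ (norm_nonneg a) hK _)

lemma npw_comm_bound (a b : A) (n : ℕ) :
    ‖npw a n * b - b * npw a n‖ ≤ (n + 1) * ‖a‖ ^ n * ‖a * b - b * a‖ := by
  induction n with
  | zero => simp [npw]
  | succ n ih =>
    have key : npw a (n+1) * b - b * npw a (n+1)
        = a * (npw a n * b - b * npw a n) + (a * b - b * a) * npw a n := by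
      simp only [npw]; noncomm_ring
    calc ‖npw a (n+1) * b - b * npw a (n+1)‖
        ≤ ‖a * (npw a n * b - b * npw a n)‖ + ‖(a * b - b * a) * npw a n‖ := by
          rw [key]; exact norm_add_le _ _
      _ ≤ ‖a‖ * ((n + 1) * ‖a‖ ^ n * ‖a * b - b * a‖) + ‖a * b - b * a‖ * ‖a‖ ^ (n+1) := by
          gcongr
          · exact (norm_mul_le _ _).trans (by gcongr)
          · exact (norm_mul_le _ _).trans (by gcongr; exact norm_npw_le a n)
      _ = ((n + 1 : ℕ) + 1) * ‖a‖ ^ (n+1) * ‖a * b - b * a‖ := by push_cast; ring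

lemma npw_lipschitz (a b : A) {K : ℝ} (ha : ‖a‖ ≤ K) (hb : ‖b‖ ≤ K) (n : ℕ) :
    ‖npw a n - npw b n‖ ≤ (n + 1) * K ^ n * ‖a - b‖ := by
  induction n with
  | zero => simp [npw]
  | succ n ih =>
    have hK : 0 ≤ K := (norm_nonneg a).trans ha
    have key : npw a (n+1) - npw b (n+1)
        = a * (npw a n - npw b n) + (a - b) * npw b n := by
      simp only [npw]; noncomm_ring
    calc ‖npw a (n+1) - npw b (n+1)‖
        ≤ ‖a * (npw a n - npw b n)‖ + ‖(a - b) * npw b n‖ := by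
          rw [key]; exact norm_add_le _ _
      _ ≤ K * ((n + 1) * K ^ n * ‖a - b‖) + ‖a - b‖ * K ^ (n+1) := by
          gcongr ?_ + ?_
          · exact (norm_mul_le _ _).trans (mul_le_mul ha ih (norm_nonneg _) hK)
          · exact (norm_mul_le _ _).trans (by gcongr; exact norm_npw_le_of b hb n)
      _ = ((n + 1 : ℕ) + 1) * K ^ (n+1) * ‖a - b‖ := by push_cast; ring

lemma pair_comm_bound (c d : A) {M : ℝ} (hc : ‖c‖ ≤ M) (hd : ‖d‖ ≤ M) (i j : ℕ) :
    ‖npw d i * npw c j - npw c j * npw d i‖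
      ≤ ((i + 1) * M ^ i) * ((j + 1) * M ^ j) * ‖c * d - d * c‖ := by
  have hM : 0 ≤ M := (norm_nonneg c).trans hc
  calc ‖npw d i * npw c j - npw c j * npw d i‖
      ≤ (i + 1) * ‖d‖ ^ i * ‖d * npw c j - npw c j * d‖ := npw_comm_bound d (npw c j) i
    _ = (i + 1) * ‖d‖ ^ i * ‖npw c j * d - d * npw c j‖ := by rw [norm_sub_rev]
    _ ≤ (i + 1) * ‖d‖ ^ i * ((j + 1) * ‖c‖ ^ j * ‖c * d - d * c‖) :=
        mul_le_mul_of_nonneg_left (npw_comm_bound c d j) (by positivity)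
    _ ≤ (i + 1) * M ^ i * ((j + 1) * M ^ j * ‖c * d - d * c‖) := by gcongr
    _ = ((i + 1) * M ^ i) * ((j + 1) * M ^ j) * ‖c * d - d * c‖ := by ring

lemma polysum_comm_bound (coef1 coef2 : ℕ → ℝ) (n1 n2 : ℕ) {c d : A} {M : ℝ}
    (hc : ‖c‖ ≤ M) (hd : ‖d‖ ≤ M) :
    ‖(∑ i ∈ Finset.range n1, coef1 i • npw d i) * (∑ j ∈ Finset.range n2, coef2 j • npw c j)
      - (∑ j ∈ Finset.range n2, coef2 j • npw c j) * (∑ i ∈ Finset.range n1, coef1 i • npw d i)‖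
    ≤ (∑ i ∈ Finset.range n1, |coef1 i| * ((i + 1) * M ^ i)) *
      (∑ j ∈ Finset.range n2, |coef2 j| * ((j + 1) * M ^ j)) * ‖c * d - d * c‖ := by
  have key : (∑ i ∈ Finset.range n1, coef1 i • npw d i) *
        (∑ j ∈ Finset.range n2, coef2 j • npw c j)
      - (∑ j ∈ Finset.range n2, coef2 j • npw c j) *
        (∑ i ∈ Finset.range n1, coef1 i • npw d i)
      = ∑ i ∈ Finset.range n1, ∑ j ∈ Finset.range n2,
          (coef1 i * coef2 j) • (npw d i * npw c j - npw c j * npw d i) := by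
    rw [Finset.sum_mul_sum, Finset.sum_mul_sum, Finset.sum_comm (s := Finset.range n2)]
    rw [← Finset.sum_sub_distrib]
    refine Finset.sum_congr rfl fun i _ => ?_
    rw [← Finset.sum_sub_distrib]
    refine Finset.sum_congr rfl fun j _ => ?_
    rw [smul_sub]
    congr 1
    · rw [smul_mul_assoc, mul_smul_comm, smul_smul]
    · rw [smul_mul_assoc, mul_smul_comm, smul_smul, mul_comm (coef2 j)]
  rw [key, Finset.sum_mul_sum, Finset.sum_mul]
  refine (norm_sum_le _ _).trans (Finset.sum_le_sum fun i _ => ?_)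
  rw [Finset.sum_mul]
  refine (norm_sum_le _ _).trans (Finset.sum_le_sum fun j _ => ?_)
  rw [norm_smul, Real.norm_eq_abs, abs_mul]
  calc |coef1 i| * |coef2 j| * ‖npw d i * npw c j - npw c j * npw d i‖
      ≤ |coef1 i| * |coef2 j| *
        (((i + 1) * M ^ i) * ((j + 1) * M ^ j) * ‖c * d - d * c‖) :=
        mul_le_mul_of_nonneg_left (pair_comm_bound c d hc hd i j) (by positivity)
    _ = |coef1 i| * ((i + 1) * M ^ i) * (|coef2 j| * ((j + 1) * M ^ j)) * ‖c * d - d * c‖ := by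
        ring

lemma polysum_lipschitz (coef : ℕ → ℝ) (n : ℕ) {x y : A} {K : ℝ}
    (hx : ‖x‖ ≤ K) (hy : ‖y‖ ≤ K) :
    ‖(∑ i ∈ Finset.range n, coef i • npw x i) - ∑ i ∈ Finset.range n, coef i • npw y i‖
      ≤ (∑ i ∈ Finset.range n, |coef i| * ((i + 1) * K ^ i)) * ‖x - y‖ := by
  rw [← Finset.sum_sub_distrib]
  simp_rw [← smul_sub]
  refine (norm_sum_le _ _).trans ?_
  rw [Finset.sum_mul]
  refine Finset.sum_le_sum fun i _ => ?_
  rw [norm_smul, Real.norm_eq_abs]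
  calc |coef i| * ‖npw x i - npw y i‖
      ≤ |coef i| * ((i + 1) * K ^ i * ‖x - y‖) :=
        mul_le_mul_of_nonneg_left (npw_lipschitz x y hx hy i) (abs_nonneg _)
    _ = |coef i| * ((i + 1) * K ^ i) * ‖x - y‖ := by ring

/-! ### Functional calculus lemmas -/

variable [PartialOrder A] [StarOrderedRing A]

lemma quasispectrum_subset_Icc {a : A} (ha : 0 ≤ a) {K : ℝ} (hK : ‖a‖ ≤ K) :
    quasispectrum ℝ a ⊆ Set.Icc 0 K := by
  intro x hx
  refine ⟨quasispectrum_nonneg_of_nonneg a ha x hx, ?_⟩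
  rw [Unitization.quasispectrum_eq_spectrum_inr' ℝ ℂ] at hx
  calc x ≤ |x| := le_abs_self x
  _ = ‖x‖ := rfl
  _ ≤ ‖(a : Unitization ℂ A)‖ := spectrum.norm_le_norm_of_mem hx
  _ = ‖a‖ := Unitization.norm_inr a
  _ ≤ K := hK

lemma quasispectrum_subset_Ici {a : A} (ha : 0 ≤ a) :
    quasispectrum ℝ a ⊆ Set.Ici 0 :=
  fun x hx => quasispectrum_nonneg_of_nonneg a ha x hx

lemma norm_cfcₙ_le_of {a : A} (ha : 0 ≤ a) {h : ℝ → ℝ} {K s : ℝ} (hK : ‖a‖ ≤ K)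
    (hs : ∀ t ∈ Set.Icc (0:ℝ) K, |h t| ≤ s) : ‖cfcₙ h a‖ ≤ s :=
  norm_cfcₙ_le fun x hx => hs x (quasispectrum_subset_Icc ha hK hx)

lemma cfcₙ_pow_succ {a : A} (ha : 0 ≤ a) (n : ℕ) :
    cfcₙ (fun t : ℝ => t ^ (n + 1)) a = npw a n := by
  induction n with
  | zero => simpa [npw] using cfcₙ_id' ℝ a
  | succ n ih =>
    have : cfcₙ (fun t : ℝ => t ^ (n + 2)) a
        = cfcₙ (fun t : ℝ => t * t ^ (n + 1)) a := by
      refine cfcₙ_congr fun x _ => ?_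
      ring
    rw [this, cfcₙ_mul (fun t : ℝ => t) (fun t : ℝ => t ^ (n + 1)) a, ih, cfcₙ_id' ℝ a]
    rfl

lemma cfcₙ_polysum {a : A} (ha : 0 ≤ a) (coef : ℕ → ℝ) (n : ℕ) :
    cfcₙ (fun t : ℝ => ∑ i ∈ Finset.range n, coef i * t ^ (i + 1)) a
      = ∑ i ∈ Finset.range n, coef i • npw a i := by
  induction n with
  | zero => simp
  | succ n ih =>
    have : cfcₙ (fun t : ℝ => ∑ i ∈ Finset.range (n+1), coef i * t ^ (i + 1)) a
        = cfcₙ (fun t : ℝ => (∑ i ∈ Finset.range n, coef i * t ^ (i + 1))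
            + coef n * t ^ (n + 1)) a := by
      refine cfcₙ_congr fun x _ => ?_
      simp [Finset.sum_range_succ]
    rw [this, cfcₙ_add (f := fun t : ℝ => ∑ i ∈ Finset.range n, coef i * t ^ (i + 1))
      (g := fun t : ℝ => coef n * t ^ (n + 1)) (hf := by fun_prop) (hf0 := by simp)
      (hg := by fun_prop) (hg0 := by simp), ih, Finset.sum_range_succ]
    congr 1
    rw [cfcₙ_const_mul (coef n) (fun t : ℝ => t ^ (n+1)) a, cfcₙ_pow_succ ha n]

lemma sqrt_eq_cfcₙ_real {a : A} (ha : 0 ≤ a) : CFC.sqrt a = cfcₙ Real.sqrt a := by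
  have hb : 0 ≤ cfcₙ Real.sqrt a := cfcₙ_nonneg fun x _ => Real.sqrt_nonneg x
  refine CFC.sqrt_unique ?_ hb
  rw [← cfcₙ_mul Real.sqrt Real.sqrt a (by fun_prop) (by simp) (by fun_prop) (by simp)]
  have : cfcₙ (fun x : ℝ => Real.sqrt x * Real.sqrt x) a = cfcₙ (id : ℝ → ℝ) a :=
    cfcₙ_congr fun x hx => Real.mul_self_sqrt (quasispectrum_nonneg_of_nonneg a ha x hx)
  rw [this, cfcₙ_id ℝ a]

lemma sqrt_cfcₙ {h : ℝ → ℝ} (hc : ContinuousOn h (Set.Ici 0)) (h0 : h 0 = 0)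
    (hpos : ∀ t, 0 ≤ t → 0 ≤ h t) {a : A} (ha : 0 ≤ a) :
    CFC.sqrt (cfcₙ h a) = cfcₙ (fun t => Real.sqrt (h t)) a := by
  have hh : 0 ≤ cfcₙ h a :=
    cfcₙ_nonneg fun x hx => hpos x (quasispectrum_nonneg_of_nonneg a ha x hx)
  rw [sqrt_eq_cfcₙ_real hh,
    ← cfcₙ_comp Real.sqrt h a (by fun_prop) (by simp) (hc.mono (quasispectrum_subset_Ici ha)) h0
      (IsSelfAdjoint.of_nonneg ha)]
  rfl

/-! ### Weierstrass with zero constant term -/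

lemma exists_monomial_sum_approx {h : ℝ → ℝ} {K : ℝ} (hK : 0 ≤ K)
    (hc : ContinuousOn h (Set.Icc 0 K)) (h0 : h 0 = 0) {ε : ℝ} (hε : 0 < ε) :
    ∃ (n : ℕ) (coef : ℕ → ℝ), ∀ t ∈ Set.Icc (0:ℝ) K,
      |h t - ∑ i ∈ Finset.range n, coef i * t ^ (i + 1)| ≤ ε := by
  obtain ⟨p, hp⟩ := exists_polynomial_near_of_continuousOn 0 K h hc (ε/2) (by positivity)
  refine ⟨p.natDegree, fun i => p.coeff (i + 1), fun t ht => ?_⟩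
  have h0K : (0:ℝ) ∈ Set.Icc (0:ℝ) K := ⟨le_refl 0, hK⟩
  have hc0 : |p.coeff 0| < ε / 2 := by
    have := hp 0 h0K
    simpa [h0, Polynomial.coeff_zero_eq_eval_zero] using this
  have heval : p.eval t = (∑ i ∈ Finset.range p.natDegree, p.coeff (i+1) * t ^ (i+1))
      + p.coeff 0 := by
    rw [Polynomial.eval_eq_sum_range, Finset.sum_range_succ']
    simp
  have hsp : h t - ∑ i ∈ Finset.range p.natDegree, p.coeff (i+1) * t ^ (i+1)
      = (h t - p.eval t) + p.coeff 0 := by rw [heval]; ring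
  rw [hsp]
  calc |(h t - p.eval t) + p.coeff 0| ≤ |h t - p.eval t| + |p.coeff 0| := abs_add_le _ _
    _ ≤ ε/2 + ε/2 := by
        refine add_le_add ?_ hc0.le
        rw [abs_sub_comm]
        exact (hp t ht).le
    _ = ε := by ring

lemma norm_cfcₙ_sub_polysum {h : ℝ → ℝ} (hc : ContinuousOn h (Set.Ici 0)) (h0 : h 0 = 0)
    {coef : ℕ → ℝ} {n : ℕ} {K ε : ℝ}
    (happrox : ∀ t ∈ Set.Icc (0:ℝ) K, |h t - ∑ i ∈ Finset.range n, coef i * t ^ (i + 1)| ≤ ε)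
    {a : A} (ha : 0 ≤ a) (hK : ‖a‖ ≤ K) :
    ‖cfcₙ h a - ∑ i ∈ Finset.range n, coef i • npw a i‖ ≤ ε := by
  rw [← cfcₙ_polysum ha coef n,
    ← cfcₙ_sub (f := h) (g := fun t : ℝ => ∑ i ∈ Finset.range n, coef i * t ^ (i + 1))
      (hf := hc.mono (quasispectrum_subset_Ici ha)) (hf0 := h0)
      (hg := by fun_prop) (hg0 := by simp)]
  exact norm_cfcₙ_le_of ha hK fun t ht => happrox t ht

end SqrtCommAux

open SqrtCommAux

/-! ### The commutator transfer lemma -/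

lemma exists_delta_commutator (h₁ h₂ : ℝ → ℝ)
    (hc₁ : ContinuousOn h₁ (Set.Ici 0)) (hc₂ : ContinuousOn h₂ (Set.Ici 0))
    (h₁0 : h₁ 0 = 0) (h₂0 : h₂ 0 = 0) {ε M : ℝ} (hε : 0 < ε) (hM : 0 < M) :
    ∃ δ : ℝ, 0 < δ ∧
      ∀ (A : Type u) [NonUnitalCStarAlgebra A] [PartialOrder A] [StarOrderedRing A],
        ∀ c d : A, 0 ≤ c → 0 ≤ d → ‖c‖ ≤ M → ‖d‖ ≤ M → ‖c * d - d * c‖ < δ →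
          ‖cfcₙ h₁ d * cfcₙ h₂ c - cfcₙ h₂ c * cfcₙ h₁ d‖ < ε := by
  have hIcc : Set.Icc (0:ℝ) M ⊆ Set.Ici 0 := fun x hx => hx.1
  obtain ⟨B₁, hB₁⟩ := isCompact_Icc.exists_bound_of_continuousOn (hc₁.mono hIcc)
  obtain ⟨B₂, hB₂⟩ := isCompact_Icc.exists_bound_of_continuousOn (hc₂.mono hIcc)
  set B₁' : ℝ := max B₁ 0 with hB₁'def
  set B₂' : ℝ := max B₂ 0 with hB₂'def
  have hB₁'0 : 0 ≤ B₁' := le_max_right _ _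
  have hB₂'0 : 0 ≤ B₂' := le_max_right _ _
  have hB₁' : ∀ t ∈ Set.Icc (0:ℝ) M, |h₁ t| ≤ B₁' :=
    fun t ht => le_trans (hB₁ t ht) (le_max_left _ _)
  have hB₂' : ∀ t ∈ Set.Icc (0:ℝ) M, |h₂ t| ≤ B₂' :=
    fun t ht => le_trans (hB₂ t ht) (le_max_left _ _)
  set ε₁ : ℝ := ε / (8 * (B₂' + 1)) with hε₁def
  have hε₁ : 0 < ε₁ := by positivity
  set ε₂ : ℝ := ε / (8 * (B₁' + ε₁ + 1)) with hε₂def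
  have hε₂ : 0 < ε₂ := by positivity
  obtain ⟨n₁, coef1, happ1⟩ := exists_monomial_sum_approx hM.le (hc₁.mono hIcc) h₁0 hε₁
  obtain ⟨n₂, coef2, happ2⟩ := exists_monomial_sum_approx hM.le (hc₂.mono hIcc) h₂0 hε₂
  set C : ℝ := (∑ i ∈ Finset.range n₁, |coef1 i| * ((i + 1) * M ^ i)) *
      (∑ j ∈ Finset.range n₂, |coef2 j| * ((j + 1) * M ^ j)) with hCdef
  have hC0 : 0 ≤ C := by
    refine mul_nonneg (Finset.sum_nonneg fun i _ => ?_) (Finset.sum_nonneg fun j _ => ?_) <;>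
      positivity
  refine ⟨ε / (2 * (C + 1)), by positivity, ?_⟩
  intro A _ _ _ c d hc0 hd0 hcM hdM hcomm
  set H₁ := cfcₙ h₁ d with hH₁def
  set H₂ := cfcₙ h₂ c with hH₂def
  set P : A := ∑ i ∈ Finset.range n₁, coef1 i • npw d i with hPdef
  set Q : A := ∑ j ∈ Finset.range n₂, coef2 j • npw c j with hQdef
  have e₁ : ‖H₁ - P‖ ≤ ε₁ := norm_cfcₙ_sub_polysum hc₁ h₁0 happ1 hd0 hdM
  have e₂ : ‖H₂ - Q‖ ≤ ε₂ := norm_cfcₙ_sub_polysum hc₂ h₂0 happ2 hc0 hcM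
  have hH₂n : ‖H₂‖ ≤ B₂' := norm_cfcₙ_le_of hc0 hcM hB₂'
  have hH₁n : ‖H₁‖ ≤ B₁' := norm_cfcₙ_le_of hd0 hdM hB₁'
  have hPn : ‖P‖ ≤ B₁' + ε₁ := by
    calc ‖P‖ = ‖H₁ - (H₁ - P)‖ := by congr 1; abel
    _ ≤ ‖H₁‖ + ‖H₁ - P‖ := norm_sub_le _ _
    _ ≤ B₁' + ε₁ := add_le_add hH₁n e₁
  have decomp : H₁ * H₂ - H₂ * H₁
      = ((H₁ - P) * H₂ - H₂ * (H₁ - P)) + (P * (H₂ - Q) - (H₂ - Q) * P) + (P * Q - Q * P) := by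
    noncomm_ring
  have bound1 : ‖(H₁ - P) * H₂ - H₂ * (H₁ - P)‖ ≤ 2 * ε₁ * B₂' := by
    calc ‖(H₁ - P) * H₂ - H₂ * (H₁ - P)‖ ≤ ‖(H₁ - P) * H₂‖ + ‖H₂ * (H₁ - P)‖ := norm_sub_le _ _
    _ ≤ ‖H₁ - P‖ * ‖H₂‖ + ‖H₂‖ * ‖H₁ - P‖ := add_le_add (norm_mul_le _ _) (norm_mul_le _ _)
    _ ≤ ε₁ * B₂' + B₂' * ε₁ := by
        refine add_le_add (mul_le_mul e₁ hH₂n (norm_nonneg _) hε₁.le)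
          (mul_le_mul hH₂n e₁ (norm_nonneg _) hB₂'0)
    _ = 2 * ε₁ * B₂' := by ring
  have bound2 : ‖P * (H₂ - Q) - (H₂ - Q) * P‖ ≤ 2 * (B₁' + ε₁) * ε₂ := by
    calc ‖P * (H₂ - Q) - (H₂ - Q) * P‖ ≤ ‖P * (H₂ - Q)‖ + ‖(H₂ - Q) * P‖ := norm_sub_le _ _
    _ ≤ ‖P‖ * ‖H₂ - Q‖ + ‖H₂ - Q‖ * ‖P‖ := add_le_add (norm_mul_le _ _) (norm_mul_le _ _)
    _ ≤ (B₁' + ε₁) * ε₂ + ε₂ * (B₁' + ε₁) := by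
        refine add_le_add (mul_le_mul hPn e₂ (norm_nonneg _) (by positivity))
          (mul_le_mul e₂ hPn (norm_nonneg _) hε₂.le)
    _ = 2 * (B₁' + ε₁) * ε₂ := by ring
  have bound3 : ‖P * Q - Q * P‖ ≤ C * ‖c * d - d * c‖ :=
    polysum_comm_bound coef1 coef2 n₁ n₂ hcM hdM
  have num1 : 2 * ε₁ * B₂' ≤ ε / 4 := by
    rw [hε₁def]
    calc 2 * (ε / (8 * (B₂' + 1))) * B₂' ≤ 2 * (ε / (8 * (B₂' + 1))) * (B₂' + 1) :=
          mul_le_mul_of_nonneg_left (by linarith) (by positivity)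
    _ = ε / 4 := by field_simp; ring
  have num2 : 2 * (B₁' + ε₁) * ε₂ ≤ ε / 4 := by
    rw [hε₂def]
    calc 2 * (B₁' + ε₁) * (ε / (8 * (B₁' + ε₁ + 1)))
        ≤ 2 * (B₁' + ε₁ + 1) * (ε / (8 * (B₁' + ε₁ + 1))) :=
          mul_le_mul_of_nonneg_right (by linarith) (by positivity)
    _ = ε / 4 := by field_simp; ring
  have num3 : C * ‖c * d - d * c‖ < ε / 2 := by
    have hlt : C / (C + 1) < 1 := by
      rw [div_lt_one (by positivity)]; linarith
    calc C * ‖c * d - d * c‖ ≤ C * (ε / (2 * (C + 1))) :=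
          mul_le_mul_of_nonneg_left hcomm.le hC0
    _ = (C / (C + 1)) * (ε / 2) := by field_simp
    _ < 1 * (ε / 2) := mul_lt_mul_of_pos_right hlt (by positivity)
    _ = ε / 2 := one_mul _
  rw [decomp]
  calc ‖(H₁ - P) * H₂ - H₂ * (H₁ - P) + (P * (H₂ - Q) - (H₂ - Q) * P) + (P * Q - Q * P)‖
      ≤ ‖(H₁ - P) * H₂ - H₂ * (H₁ - P)‖ + ‖P * (H₂ - Q) - (H₂ - Q) * P‖ + ‖P * Q - Q * P‖ :=
        norm_add₃_le
    _ < ε := by linarith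

/-- Let `f, g : [0, ∞) → [0, ∞)` be continuous with `f 0 = g 0 = 0`,
let `ε > 0` and `M > 0`.  Then there is `δ > 0`, uniform over all C*-algebras `A`,
such that whenever `c, d ∈ A` are positive with `‖c‖ ≤ M`, `‖d‖ ≤ M` and
`‖c * d - d * c‖ < δ`, one has
`‖(f(d) g(c) f(d))^(1/2) - f(d)^(1/2) g(c)^(1/2) f(d)^(1/2)‖ < ε`,
where functions of positive elements are defined via the non-unital continuous
functional calculus and `CFC.sqrt` is the positive square root. -/
theorem exists_delta_sqrt_commutator_cfc
    (f g : ℝ → ℝ)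
    (hf : ContinuousOn f (Set.Ici 0)) (hg : ContinuousOn g (Set.Ici 0))
    (hf0 : f 0 = 0) (hg0 : g 0 = 0)
    (hfpos : ∀ t, 0 ≤ t → 0 ≤ f t) (hgpos : ∀ t, 0 ≤ t → 0 ≤ g t)
    (ε : ℝ) (hε : 0 < ε) (M : ℝ) (hM : 0 < M) :
    ∃ δ : ℝ, 0 < δ ∧
      ∀ (A : Type u) [NonUnitalCStarAlgebra A] [PartialOrder A] [StarOrderedRing A],
        ∀ c d : A, 0 ≤ c → 0 ≤ d → ‖c‖ ≤ M → ‖d‖ ≤ M → ‖c * d - d * c‖ < δ →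
          ‖CFC.sqrt (cfcₙ f d * cfcₙ g c * cfcₙ f d) -
              CFC.sqrt (cfcₙ f d) * CFC.sqrt (cfcₙ g c) * CFC.sqrt (cfcₙ f d)‖ < ε := by
  classical
  have hIcc : Set.Icc (0:ℝ) M ⊆ Set.Ici 0 := fun x hx => hx.1
  obtain ⟨Bf, hBf⟩ := isCompact_Icc.exists_bound_of_continuousOn (hf.mono hIcc)
  obtain ⟨Bg, hBg⟩ := isCompact_Icc.exists_bound_of_continuousOn (hg.mono hIcc)
  obtain ⟨Kf, hKfdef⟩ : ∃ x : ℝ, x = max Bf 0 := ⟨_, rfl⟩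
  obtain ⟨Kg, hKgdef⟩ : ∃ x : ℝ, x = max Bg 0 := ⟨_, rfl⟩
  have hKf0 : 0 ≤ Kf := by rw [hKfdef]; exact le_max_right _ _
  have hKg0 : 0 ≤ Kg := by rw [hKgdef]; exact le_max_right _ _
  have hKfb : ∀ t ∈ Set.Icc (0:ℝ) M, |f t| ≤ Kf := fun t ht => (hBf t ht).trans (le_of_eq hKfdef.symm |>.trans' (le_max_left _ _))
  have hKgb : ∀ t ∈ Set.Icc (0:ℝ) M, |g t| ≤ Kg := fun t ht => (hBg t ht).trans (le_of_eq hKgdef.symm |>.trans' (le_max_left _ _))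
  set sf : ℝ → ℝ := fun t => Real.sqrt (f t) with hsfdef
  set sg : ℝ → ℝ := fun t => Real.sqrt (g t) with hsgdef
  have hsfc : ContinuousOn sf (Set.Ici 0) := Real.continuous_sqrt.comp_continuousOn hf
  have hsgc : ContinuousOn sg (Set.Ici 0) := Real.continuous_sqrt.comp_continuousOn hg
  have hsf0 : sf 0 = 0 := by simp [hsfdef, hf0]
  have hsg0 : sg 0 = 0 := by simp [hsgdef, hg0]
  obtain ⟨sKf, hsKfdef⟩ : ∃ x : ℝ, x = Real.sqrt Kf := ⟨_, rfl⟩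
  obtain ⟨sKg, hsKgdef⟩ : ∃ x : ℝ, x = Real.sqrt Kg := ⟨_, rfl⟩
  have hsKf0 : 0 ≤ sKf := by rw [hsKfdef]; exact Real.sqrt_nonneg _
  have hsKg0 : 0 ≤ sKg := by rw [hsKgdef]; exact Real.sqrt_nonneg _
  obtain ⟨K, hKdef⟩ : ∃ x : ℝ, x = Kf * Kg * Kf := ⟨_, rfl⟩
  have hK0 : 0 ≤ K := by rw [hKdef]; positivity
  obtain ⟨n, coef, happ⟩ := SqrtCommAux.exists_monomial_sum_approx hK0
    Real.continuous_sqrt.continuousOn Real.sqrt_zero (show (0:ℝ) < ε/4 by positivity)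
  obtain ⟨L, hLdef⟩ : ∃ x : ℝ, x = ∑ i ∈ Finset.range n, |coef i| * ((i + 1) * K ^ i) := ⟨_, rfl⟩
  have hL0 : 0 ≤ L := by rw [hLdef]; exact Finset.sum_nonneg fun i _ => by positivity
  obtain ⟨C₁, hC₁def⟩ : ∃ x : ℝ, x = 2 * sKf * sKg * sKf * sKf := ⟨_, rfl⟩
  have hC₁0 : 0 ≤ C₁ := by rw [hC₁def]; positivity
  have hLC : 0 ≤ L * C₁ := mul_nonneg hL0 hC₁0
  obtain ⟨η, hηdef⟩ : ∃ x : ℝ, x = (ε / 4) / (L * C₁ + 1) := ⟨_, rfl⟩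
  have hη : 0 < η := by rw [hηdef]; exact div_pos (by positivity) (by linarith)
  obtain ⟨δ, hδ0, hδ⟩ := exists_delta_commutator sf sg hsfc hsgc hsf0 hsg0 hη hM
  refine ⟨δ, hδ0, ?_⟩
  intro A _ _ _ c d hc0 hd0 hcM hdM hcomm
  set F : A := cfcₙ f d with hFdef
  set G : A := cfcₙ g c with hGdef
  have hF0 : 0 ≤ F :=
    cfcₙ_nonneg fun x hx => hfpos x (quasispectrum_nonneg_of_nonneg d hd0 x hx)
  have hG0 : 0 ≤ G :=
    cfcₙ_nonneg fun x hx => hgpos x (quasispectrum_nonneg_of_nonneg c hc0 x hx)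
  have hFn : ‖F‖ ≤ Kf := norm_cfcₙ_le_of hd0 hdM hKfb
  have hGn : ‖G‖ ≤ Kg := norm_cfcₙ_le_of hc0 hcM hKgb
  set SF : A := CFC.sqrt F with hSFdef
  set SG : A := CFC.sqrt G with hSGdef
  have hSF : SF = cfcₙ sf d := sqrt_cfcₙ hf hf0 hfpos hd0
  have hSG : SG = cfcₙ sg c := sqrt_cfcₙ hg hg0 hgpos hc0
  have hSF0 : 0 ≤ SF := CFC.sqrt_nonneg F
  have hSG0 : 0 ≤ SG := CFC.sqrt_nonneg G
  have hSFn : ‖SF‖ ≤ sKf := by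
    rw [hSF, hsKfdef]
    refine norm_cfcₙ_le_of hd0 hdM fun t ht => ?_
    rw [abs_of_nonneg (Real.sqrt_nonneg _)]
    exact Real.sqrt_le_sqrt ((le_abs_self _).trans (hKfb t ht))
  have hSGn : ‖SG‖ ≤ sKg := by
    rw [hSG, hsKgdef]
    refine norm_cfcₙ_le_of hc0 hcM fun t ht => ?_
    rw [abs_of_nonneg (Real.sqrt_nonneg _)]
    exact Real.sqrt_le_sqrt ((le_abs_self _).trans (hKgb t ht))
  have hFs : SF * SF = F := CFC.sqrt_mul_sqrt_self F hF0
  have hGs : SG * SG = G := CFC.sqrt_mul_sqrt_self G hG0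
  set e : A := SF * SG - SG * SF with hedef
  have hv : ‖e‖ < η := by
    rw [hedef, hSF, hSG]
    exact hδ A c d hc0 hd0 hcM hdM hcomm
  set z : A := SF * SG * SF with hzdef
  set w : A := F * G * F with hwdef
  have hz0 : 0 ≤ z := by
    have := star_left_conjugate_nonneg hSG0 SF
    rwa [(IsSelfAdjoint.of_nonneg hSF0).star_eq] at this
  have hw0 : 0 ≤ w := by
    have := star_left_conjugate_nonneg hG0 F
    rwa [(IsSelfAdjoint.of_nonneg hF0).star_eq] at this
  have hzz0 : 0 ≤ z * z := by
    simpa [(IsSelfAdjoint.of_nonneg hz0).star_eq] using star_mul_self_nonneg z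
  have hwn : ‖w‖ ≤ K := by
    rw [hwdef, hKdef]
    exact (norm_mul_le _ _).trans
      (mul_le_mul ((norm_mul_le _ _).trans
        (mul_le_mul hFn hGn (norm_nonneg _) hKf0)) hFn (norm_nonneg _) (by positivity))
  have hzn : ‖z‖ ≤ sKf * sKg * sKf := by
    rw [hzdef]
    exact (norm_mul_le _ _).trans
      (mul_le_mul ((norm_mul_le _ _).trans
        (mul_le_mul hSFn hSGn (norm_nonneg _) hsKf0)) hSFn (norm_nonneg _) (by positivity))
  have hzzn : ‖z * z‖ ≤ K := by
    have h1 : ‖z * z‖ ≤ (sKf * sKg * sKf) * (sKf * sKg * sKf) :=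
      (norm_mul_le _ _).trans (mul_le_mul hzn hzn (norm_nonneg _) (by positivity))
    have h2 : (sKf * sKg * sKf) * (sKf * sKg * sKf)
        = (sKf * sKf) * (sKf * sKf) * (sKg * sKg) := by ring
    rw [h2, hsKfdef, hsKgdef, Real.mul_self_sqrt hKf0, Real.mul_self_sqrt hKg0] at h1
    calc ‖z * z‖ ≤ Kf * Kf * Kg := h1
    _ = K := by rw [hKdef]; ring
  have hid : w - z * z = SF * (e * (SF * SG) - (SF * SG) * e) * SF := by
    have key : (SF * SF) * (SG * SG) * (SF * SF) - (SF * SG * SF) * (SF * SG * SF)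
        = SF * ((SF * SG - SG * SF) * (SF * SG) - (SF * SG) * (SF * SG - SG * SF)) * SF := by
      noncomm_ring
    rw [hFs, hGs] at key
    rw [hwdef, hzdef, hedef]
    exact key
  have hin : ‖e * (SF * SG) - (SF * SG) * e‖ ≤ 2 * (sKf * sKg) * ‖e‖ := by
    have hfg : ‖SF * SG‖ ≤ sKf * sKg :=
      (norm_mul_le _ _).trans (mul_le_mul hSFn hSGn (norm_nonneg _) hsKf0)
    calc ‖e * (SF * SG) - (SF * SG) * e‖
        ≤ ‖e * (SF * SG)‖ + ‖(SF * SG) * e‖ := norm_sub_le _ _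
      _ ≤ ‖e‖ * ‖SF * SG‖ + ‖SF * SG‖ * ‖e‖ := add_le_add (norm_mul_le _ _) (norm_mul_le _ _)
      _ ≤ ‖e‖ * (sKf * sKg) + (sKf * sKg) * ‖e‖ :=
          add_le_add (mul_le_mul_of_nonneg_left hfg (norm_nonneg _))
            (mul_le_mul_of_nonneg_right hfg (norm_nonneg _))
      _ = 2 * (sKf * sKg) * ‖e‖ := by ring
  have hwz : ‖w - z * z‖ ≤ C₁ * ‖e‖ := by
    rw [hid]
    calc ‖SF * (e * (SF * SG) - (SF * SG) * e) * SF‖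
        ≤ ‖SF * (e * (SF * SG) - (SF * SG) * e)‖ * ‖SF‖ := norm_mul_le _ _
      _ ≤ (‖SF‖ * ‖e * (SF * SG) - (SF * SG) * e‖) * ‖SF‖ :=
          mul_le_mul_of_nonneg_right (norm_mul_le _ _) (norm_nonneg _)
      _ ≤ (sKf * (2 * (sKf * sKg) * ‖e‖)) * sKf := by
          refine mul_le_mul (mul_le_mul hSFn hin (norm_nonneg _) hsKf0) hSFn
            (norm_nonneg _) (by positivity)
      _ = C₁ * ‖e‖ := by rw [hC₁def]; ring
  have hA1 : ‖CFC.sqrt w - ∑ i ∈ Finset.range n, coef i • SqrtCommAux.npw w i‖ ≤ ε / 4 := by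
    rw [sqrt_eq_cfcₙ_real hw0]
    exact norm_cfcₙ_sub_polysum Real.continuous_sqrt.continuousOn Real.sqrt_zero happ hw0 hwn
  have hA3 : ‖CFC.sqrt (z * z) - ∑ i ∈ Finset.range n, coef i • SqrtCommAux.npw (z * z) i‖
      ≤ ε / 4 := by
    rw [sqrt_eq_cfcₙ_real hzz0]
    exact norm_cfcₙ_sub_polysum Real.continuous_sqrt.continuousOn Real.sqrt_zero happ hzz0 hzzn
  have hA2 : ‖(∑ i ∈ Finset.range n, coef i • SqrtCommAux.npw w i)
      - ∑ i ∈ Finset.range n, coef i • SqrtCommAux.npw (z * z) i‖ ≤ L * ‖w - z * z‖ := by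
    rw [hLdef]; exact polysum_lipschitz coef n hwn hzzn
  have hA2' : ‖(∑ i ∈ Finset.range n, coef i • SqrtCommAux.npw w i)
      - ∑ i ∈ Finset.range n, coef i • SqrtCommAux.npw (z * z) i‖ < ε / 4 := by
    have step : L * ‖w - z * z‖ ≤ L * (C₁ * ‖e‖) := by
      refine mul_le_mul_of_nonneg_left ?_ hL0
      exact hwz
    have step2 : L * (C₁ * ‖e‖) ≤ L * C₁ * η := by
      rw [← mul_assoc]
      exact mul_le_mul_of_nonneg_left hv.le hLC
    have step3 : L * C₁ * η < ε / 4 := by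
      have hne : L * C₁ + 1 ≠ 0 := ne_of_gt (by linarith)
      have hlt : L * C₁ / (L * C₁ + 1) < 1 := by
        rw [div_lt_one (by linarith)]; linarith
      calc L * C₁ * η = (L * C₁ / (L * C₁ + 1)) * (ε / 4) := by
            rw [hηdef, ← mul_div_assoc, div_mul_eq_mul_div]
        _ < 1 * (ε / 4) := mul_lt_mul_of_pos_right hlt (by positivity)
        _ = ε / 4 := one_mul _
    linarith [hA2]
  have hzsq : CFC.sqrt (z * z) = z := CFC.sqrt_mul_self z hz0
  have key : CFC.sqrt w - z
      = (CFC.sqrt w - ∑ i ∈ Finset.range n, coef i • SqrtCommAux.npw w i)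
        + ((∑ i ∈ Finset.range n, coef i • SqrtCommAux.npw w i)
          - ∑ i ∈ Finset.range n, coef i • SqrtCommAux.npw (z * z) i)
        + ((∑ i ∈ Finset.range n, coef i • SqrtCommAux.npw (z * z) i) - CFC.sqrt (z * z)) := by
    rw [hzsq]; abel
  calc ‖CFC.sqrt w - z‖
      ≤ ‖CFC.sqrt w - ∑ i ∈ Finset.range n, coef i • SqrtCommAux.npw w i‖
        + ‖(∑ i ∈ Finset.range n, coef i • SqrtCommAux.npw w i)
          - ∑ i ∈ Finset.range n, coef i • SqrtCommAux.npw (z * z) i‖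
        + ‖(∑ i ∈ Finset.range n, coef i • SqrtCommAux.npw (z * z) i) - CFC.sqrt (z * z)‖ := by
        rw [key]; exact norm_add₃_le
    _ < ε := by
        rw [norm_sub_rev (∑ i ∈ Finset.range n, coef i • SqrtCommAux.npw (z * z) i)]
        linarith
end

section
/- Let A be a C*-algebra, let ε > 0, and let a ∈ A be positive with ‖a‖ ≤ 1. Then for every y ∈ A one has (y y* − y a y* − ε)₊ ≾_A (y y* − y a² y* − ε)₊ ≾_A (y y* − y a y* − ε/2)₊. -/
open Filter Topology

variable {A : Type*} [NonUnitalCStarAlgebra A] [PartialOrder A] [StarOrderedRing A]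

/-- Cuntz subequivalence in `A`: there is a sequence `(w n)` in `A` with
`‖w n * b * (w n)⋆ - a‖ → 0`. -/
def CuntzLE (a b : A) : Prop :=
  ∃ w : ℕ → A, Tendsto (fun n => ‖w n * b * star (w n) - a‖) atTop (𝓝 0)

set_option linter.unusedSectionVars false


private lemma cuntzLE_of_forall {x q : A}
    (h : ∀ δ : ℝ, 0 < δ → ∃ w : A, ‖w * q * star w - x‖ < δ) : CuntzLE x q := by
  choose w hw using fun n : ℕ => h (1 / (n + 1)) (by positivity)
  exact ⟨w, squeeze_zero (fun n => norm_nonneg _) (fun n => (hw n).le)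
    tendsto_one_div_add_atTop_nhds_zero_nat⟩

private lemma cuntzLE_forall {x q : A} (h : CuntzLE x q) :
    ∀ δ : ℝ, 0 < δ → ∃ w : A, ‖w * q * star w - x‖ < δ := by
  obtain ⟨w, hw⟩ := h
  intro δ hδ
  obtain ⟨n, hn⟩ := (Metric.tendsto_atTop.mp hw δ hδ)
  refine ⟨w n, ?_⟩
  have := hn n le_rfl
  rwa [Real.dist_0_eq_abs, abs_of_nonneg (norm_nonneg _)] at this

private lemma cuntzLE_trans {x y z : A} (h1 : CuntzLE x y) (h2 : CuntzLE y z) : CuntzLE x z := by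
  refine cuntzLE_of_forall fun δ hδ => ?_
  obtain ⟨u, hu⟩ := cuntzLE_forall h1 (δ / 2) (by positivity)
  obtain ⟨v, hv⟩ := cuntzLE_forall h2 (δ / (2 * (‖u‖ ^ 2 + 1))) (by positivity)
  refine ⟨u * v, ?_⟩
  have key : u * v * z * star (u * v) - x
      = u * (v * z * star v - y) * star u + (u * y * star u - x) := by
    simp only [star_mul]; noncomm_ring
  have b1 : ‖u * (v * z * star v - y) * star u‖ ≤ ‖u‖ ^ 2 * ‖v * z * star v - y‖ := by
    calc ‖u * (v * z * star v - y) * star u‖ ≤ ‖u * (v * z * star v - y)‖ * ‖star u‖ :=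
          norm_mul_le _ _
      _ ≤ ‖u‖ * ‖v * z * star v - y‖ * ‖star u‖ :=
          mul_le_mul_of_nonneg_right (norm_mul_le _ _) (norm_nonneg _)
      _ = ‖u‖ ^ 2 * ‖v * z * star v - y‖ := by rw [norm_star]; ring
  calc ‖u * v * z * star (u * v) - x‖
      ≤ ‖u * (v * z * star v - y) * star u‖ + ‖u * y * star u - x‖ := by
        rw [key]; exact norm_add_le _ _
    _ < δ := by
        have h2' : ‖u‖ ^ 2 * ‖v * z * star v - y‖ ≤ ‖u‖ ^ 2 * (δ / (2 * (‖u‖ ^ 2 + 1))) := by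
          exact mul_le_mul_of_nonneg_left hv.le (sq_nonneg _)
        have hnn : (0:ℝ) ≤ ‖u‖ ^ 2 := sq_nonneg _
        have : ‖u‖ ^ 2 * (δ / (2 * (‖u‖ ^ 2 + 1))) < δ / 2 := by
          rw [mul_div_assoc', div_lt_div_iff₀ (by positivity) (by norm_num)]
          nlinarith [sq_nonneg ‖u‖]
        nlinarith [b1.trans h2']

private lemma cuntzLE_of_smul_two {x q : A} (h : CuntzLE x ((2:ℝ) • q)) : CuntzLE x q := by
  obtain ⟨w, hw⟩ := h
  refine ⟨fun n => (Real.sqrt 2 : ℝ) • w n, ?_⟩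
  have hEq : ∀ n, (Real.sqrt 2 : ℝ) • w n * q * star ((Real.sqrt 2 : ℝ) • w n)
      = w n * ((2:ℝ) • q) * star (w n) := by
    intro n
    rw [star_smul, star_trivial, smul_mul_assoc, smul_mul_assoc, mul_smul_comm, smul_smul,
      Real.mul_self_sqrt (by norm_num), mul_smul_comm, smul_mul_assoc]
  simpa only [hEq] using hw

private lemma aux_smul_nonneg {t : ℝ} (ht : 0 ≤ t) {x : A} (hx : 0 ≤ x) : 0 ≤ t • x := by
  have hsa : IsSelfAdjoint x := .of_nonneg hx
  rw [← cfcₙ_const_mul_id t x]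
  exact cfcₙ_nonneg fun u hu => mul_nonneg ht (quasispectrum_nonneg_of_nonneg x hx u hu)

section Core

variable {B : Type*} [CStarAlgebra B] [PartialOrder B] [StarOrderedRing B]

private lemma L1core {x y s : B} (hs : 0 ≤ s) (hsx : s * s = x) (hxy : x ≤ y)
    {δ : ℝ} (hδ : 0 < δ) : ∃ z : B, ‖(s * z) * y * star (s * z) - x‖ < δ := by
  have hs_sa : star s = s := (IsSelfAdjoint.of_nonneg hs).star_eq
  have hx : 0 ≤ x := by rw [← hsx]; nth_rewrite 1 [← hs_sa]; exact star_mul_self_nonneg s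
  have hy : 0 ≤ y := hx.trans hxy
  have hy_sa : IsSelfAdjoint y := .of_nonneg hy
  have hspec : ∀ u ∈ spectrum ℝ y, 0 ≤ u := fun u hu => spectrum_nonneg_of_nonneg hy hu
  set t : ℝ := δ / 2 with ht_def
  have ht : 0 < t := by positivity
  have hne : ∀ u ∈ spectrum ℝ y, u + t ≠ 0 := fun u hu => by
    have := hspec u hu; positivity
  set G : ℝ → ℝ := fun u => u / (u + t) with hG_def
  have hGc : ContinuousOn G (spectrum ℝ y) :=
    ContinuousOn.div continuousOn_id (by fun_prop) hne
  set f : ℝ → ℝ := fun u => Real.sqrt ((u + t)⁻¹) with hf_def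
  have hfc : ContinuousOn f (spectrum ℝ y) :=
    Real.continuous_sqrt.comp_continuousOn <| ContinuousOn.inv₀ (by fun_prop) hne
  set z := cfc f y with hz_def
  have hz_nonneg : 0 ≤ z := cfc_nonneg fun u _ => Real.sqrt_nonneg _
  have hz_sa : star z = z := (IsSelfAdjoint.of_nonneg hz_nonneg).star_eq
  -- z * y * z = cfc G y
  have hzyz : z * y * z = cfc G y := by
    have key : cfc (fun u => f u * id u * f u) y = cfc f y * y * cfc f y := by
      rw [cfc_mul (fun u => f u * id u) f y (hfc.mul continuousOn_id) hfc, cfc_mul _ _ y hfc continuousOn_id,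
        cfc_id ℝ y]
    rw [hz_def, ← key]
    refine cfc_congr fun u hu => ?_
    have hu0 := hspec u hu
    have : Real.sqrt ((u + t)⁻¹) * Real.sqrt ((u + t)⁻¹) = (u + t)⁻¹ :=
      Real.mul_self_sqrt (by positivity)
    show f u * id u * f u = G u
    simp only [f, G, id]
    rw [mul_comm (Real.sqrt _) u, mul_assoc, this, div_eq_mul_inv]
  set Dsq := cfc (fun u => Real.sqrt (1 - G u)) y with hDsq_def
  have hDsq_cont : ContinuousOn (fun u => Real.sqrt (1 - G u)) (spectrum ℝ y) :=
    Real.continuous_sqrt.comp_continuousOn <| (continuousOn_const.sub hGc)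
  have hDsq_nonneg : 0 ≤ Dsq := cfc_nonneg fun u _ => Real.sqrt_nonneg _
  have hDsq_sa : star Dsq = Dsq := (IsSelfAdjoint.of_nonneg hDsq_nonneg).star_eq
  have hD : Dsq * Dsq = 1 - cfc G y := by
    rw [hDsq_def, ← cfc_mul _ _ y hDsq_cont hDsq_cont]
    have : cfc (fun u => Real.sqrt (1 - G u) * Real.sqrt (1 - G u)) y
        = cfc (fun u => 1 - G u) y := by
      refine cfc_congr fun u hu => ?_
      have hu0 := hspec u hu
      refine Real.mul_self_sqrt ?_
      have : G u ≤ 1 := by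
        rw [hG_def]; exact div_le_one_of_le₀ (by linarith) (by positivity)
      linarith
    rw [this, cfc_sub _ _ y continuousOn_const hGc, cfc_const_one ℝ y]
  -- main computation
  refine ⟨z, ?_⟩
  have h1 : (s * z) * y * star (s * z) = s * cfc G y * s := by
    rw [star_mul, hz_sa, hs_sa, ← hzyz]; noncomm_ring
  have h2 : (s * z) * y * star (s * z) - x = -(s * (1 - cfc G y) * s) := by
    rw [h1, ← hsx]; noncomm_ring
  rw [h2, norm_neg, ← hD]
  have hv : s * (Dsq * Dsq) * s = star (Dsq * s) * (Dsq * s) := by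
    rw [star_mul, hDsq_sa, hs_sa]; noncomm_ring
  rw [hv, CStarRing.norm_star_mul_self, ← CStarRing.norm_self_mul_star]
  have hvv : Dsq * s * star (Dsq * s) = Dsq * x * Dsq := by
    rw [star_mul, hDsq_sa, hs_sa, ← hsx]; noncomm_ring
  rw [hvv]
  have hle1 : Dsq * x * Dsq ≤ Dsq * y * Dsq := by
    have := star_left_conjugate_le_conjugate hxy Dsq
    rwa [hDsq_sa] at this
  have hge0 : 0 ≤ Dsq * x * Dsq := by
    have := star_left_conjugate_nonneg hx Dsq
    rwa [hDsq_sa] at this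
  refine lt_of_le_of_lt (le_trans (CStarAlgebra.norm_le_norm_of_nonneg_of_le hge0 hle1) ?_)
    (by rw [ht_def]; linarith : t < δ)
  -- ‖Dsq * y * Dsq‖ ≤ t
  have hDyD : Dsq * y * Dsq = cfc (fun u => Real.sqrt (1 - G u) * id u * Real.sqrt (1 - G u)) y := by
    rw [cfc_mul (fun u => Real.sqrt (1 - G u) * id u) (fun u => Real.sqrt (1 - G u)) y (hDsq_cont.mul continuousOn_id) hDsq_cont,
      cfc_mul _ _ y hDsq_cont continuousOn_id, cfc_id ℝ y]
  rw [hDyD]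
  refine norm_cfc_le ht.le fun u hu => ?_
  have hu0 := hspec u hu
  have hG1 : G u ≤ 1 := by
    rw [hG_def]; exact div_le_one_of_le₀ (by linarith) (by positivity)
  have hsq : Real.sqrt (1 - G u) * id u * Real.sqrt (1 - G u) = (1 - G u) * u := by
    simp only [id]
    rw [mul_comm (Real.sqrt _) u, mul_assoc, Real.mul_self_sqrt (by linarith)]
    ring
  rw [hsq, Real.norm_eq_abs, abs_of_nonneg (by nlinarith)]
  -- (1 - G u) * u ≤ t
  have : (1 - G u) * u = t * u / (u + t) := by
    rw [hG_def]; field_simp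
    ring
  rw [this]
  rw [div_le_iff₀ (by positivity)]
  nlinarith

end Core

private lemma cuntzLE_of_le' {x y : A} (hx : 0 ≤ x) (hxy : x ≤ y) {δ : ℝ} (hδ : 0 < δ) :
    ∃ w : A, ‖w * y * star w - x‖ < δ := by
  have hy : 0 ≤ y := hx.trans hxy
  have hx_sa : IsSelfAdjoint x := .of_nonneg hx
  set s₀ := cfcₙ Real.sqrt x with hs₀_def
  have hs₀n : 0 ≤ s₀ := cfcₙ_nonneg fun t _ => Real.sqrt_nonneg t
  have hs₀x : s₀ * s₀ = x := by
    rw [hs₀_def, ← cfcₙ_mul _ _ x (by fun_prop) (by simp) (by fun_prop) (by simp)]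
    have : cfcₙ (fun t => Real.sqrt t * Real.sqrt t) x = cfcₙ (id : ℝ → ℝ) x :=
      cfcₙ_congr fun t ht =>
        Real.mul_self_sqrt (quasispectrum_nonneg_of_nonneg x hx t ht)
    rw [this, cfcₙ_id ℝ x]
  -- move to the unitization
  obtain ⟨z, hz⟩ := L1core (B := Unitization ℂ A) (x := (x : Unitization ℂ A))
    (y := (y : Unitization ℂ A)) (s := (s₀ : Unitization ℂ A))
    (Unitization.inr_nonneg_iff.mpr hs₀n)
    (by rw [← Unitization.inr_mul, hs₀x])
    ((Unitization.inr_le_iff x y hx_sa (IsSelfAdjoint.of_nonneg hy)).mpr hxy) hδ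
  refine ⟨z.fst • s₀ + s₀ * z.snd, ?_⟩
  have hw : ((z.fst • s₀ + s₀ * z.snd : A) : Unitization ℂ A) = (s₀ : Unitization ℂ A) * z := by
    refine Unitization.ext ?_ ?_ <;>
      simp [Unitization.fst_mul, Unitization.snd_mul]
  rw [← Unitization.norm_inr (𝕜 := ℂ), Unitization.inr_sub, Unitization.inr_mul,
    Unitization.inr_mul, Unitization.inr_star, hw]
  exact hz

private lemma cuntzLE_of_le {x y : A} (hx : 0 ≤ x) (hxy : x ≤ y) : CuntzLE x y :=
  cuntzLE_of_forall fun _ hδ => cuntzLE_of_le' hx hxy hδ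

private lemma key {ε : ℝ} (hε : 0 < ε) {b c : A} (hb : 0 ≤ b) (hbc : b ≤ c) :
    CuntzLE (cutdown b ε) (cutdown c ε) := by
  have hc : 0 ≤ c := hb.trans hbc
  have hb_sa : IsSelfAdjoint b := .of_nonneg hb
  have hc_sa : IsSelfAdjoint c := .of_nonneg hc
  have hsb : ∀ t ∈ quasispectrum ℝ b, 0 ≤ t := fun t ht =>
    quasispectrum_nonneg_of_nonneg b hb t ht
  have hsc : ∀ t ∈ quasispectrum ℝ c, 0 ≤ t := fun t ht =>
    quasispectrum_nonneg_of_nonneg c hc t ht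
  set P : ℝ → ℝ := fun t => max (t - ε) 0 with hP_def
  have hPc : Continuous P := by fun_prop
  have hP0 : P 0 = 0 := by simp [hP_def, hε.le]
  have hPnn : ∀ t, 0 ≤ P t := fun t => le_max_right _ _
  have hp_def : cutdown b ε = cfcₙ P b := rfl
  set q := cutdown c ε with hq
  have hq_def : q = cfcₙ P c := hq
  have hq0 : 0 ≤ q := by
    rw [hq_def]; exact cfcₙ_nonneg fun t _ => hPnn t
  -- the function g and element r
  set g : ℝ → ℝ := fun t => Real.sqrt (P t / t) with hg_def
  have hg_cont : Continuous g := by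
    rw [continuous_iff_continuousAt]
    intro t₀
    rcases lt_or_ge t₀ ε with h | h
    · refine Filter.EventuallyEq.continuousAt (y := (0:ℝ)) ?_
      filter_upwards [Iio_mem_nhds h] with s hs
      rw [Set.mem_Iio] at hs
      simp [hg_def, hP_def, max_eq_right (by linarith : s - ε ≤ 0)]
    · have ht0 : t₀ ≠ 0 := by have := hε.trans_le h; positivity
      exact Real.continuous_sqrt.continuousAt.comp <|
        ContinuousAt.div (by fun_prop) continuousAt_id ht0
  have hg0 : g 0 = 0 := by simp [hg_def]
  set r := cfcₙ g b with hr_def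
  have hr0 : 0 ≤ r := cfcₙ_nonneg fun t _ => Real.sqrt_nonneg _
  have hr_sa : star r = r := (IsSelfAdjoint.of_nonneg hr0).star_eq
  -- the function h
  set H : ℝ → ℝ := fun t => (P t) ^ 2 / t with hH_def
  have hH_cont : Continuous H := by
    rw [continuous_iff_continuousAt]
    intro t₀
    rcases lt_or_ge t₀ ε with h | h
    · refine Filter.EventuallyEq.continuousAt (y := (0:ℝ)) ?_
      filter_upwards [Iio_mem_nhds h] with s hs
      rw [Set.mem_Iio] at hs
      simp [hH_def, hP_def, max_eq_right (by linarith : s - ε ≤ 0)]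
    · have ht0 : t₀ ≠ 0 := by have := hε.trans_le h; positivity
      exact ContinuousAt.div (by fun_prop) continuousAt_id ht0
  have hH0 : H 0 = 0 := by simp [hH_def]
  have hHnn : ∀ t ∈ quasispectrum ℝ b, 0 ≤ H t := fun t ht =>
    div_nonneg (sq_nonneg _) (hsb t ht)
  -- identity (I1) : r * b * r = cutdown b ε
  have hI1 : r * b * r = cutdown b ε := by
    have key1 : cfcₙ (fun t => g t * id t * g t) b = cfcₙ g b * b * cfcₙ g b := by
      rw [cfcₙ_mul (fun t => g t * id t) g b ((hg_cont.mul continuous_id).continuousOn) (by simp [hg0])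
          hg_cont.continuousOn hg0,
        cfcₙ_mul _ _ b hg_cont.continuousOn hg0 continuousOn_id rfl, cfcₙ_id ℝ b]
    rw [hr_def, ← key1, hp_def]
    refine cfcₙ_congr fun t ht => ?_
    have ht0 := hsb t ht
    rcases eq_or_lt_of_le ht0 with h0 | h0
    · simp [hg_def, hP_def, ← h0, hε.le]
    · show g t * t * g t = P t
      rw [hg_def, mul_comm (Real.sqrt _) t, mul_assoc,
        Real.mul_self_sqrt (div_nonneg (hPnn t) ht0), mul_div_cancel₀ _ h0.ne']
  -- identity (I2) : r * r = cfcₙ (P t / t) b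
  have hPt_cont : Continuous (fun t => P t / t) := by
    rw [continuous_iff_continuousAt]
    intro t₀
    rcases lt_or_ge t₀ ε with h | h
    · refine Filter.EventuallyEq.continuousAt (y := (0:ℝ)) ?_
      filter_upwards [Iio_mem_nhds h] with s hs
      rw [Set.mem_Iio] at hs
      simp [hP_def, max_eq_right (by linarith : s - ε ≤ 0)]
    · have ht0 : t₀ ≠ 0 := by have := hε.trans_le h; positivity
      exact ContinuousAt.div (by fun_prop) continuousAt_id ht0
  have hI2 : r * r = cfcₙ (fun t => P t / t) b := by
    rw [hr_def, ← cfcₙ_mul _ _ b hg_cont.continuousOn hg0 hg_cont.continuousOn hg0]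
    refine cfcₙ_congr fun t ht => ?_
    exact Real.mul_self_sqrt (div_nonneg (hPnn t) (hsb t ht))
  -- identity (I3) : cfcₙ H b = cutdown b ε - ε • (r * r)
  have hI3 : cfcₙ H b = cutdown b ε - ε • (r * r) := by
    rw [hI2, hp_def, ← cfcₙ_const_mul ε _ b hPt_cont.continuousOn (by simp),
      ← cfcₙ_sub P (fun t => ε * (P t / t)) b hPc.continuousOn hP0
        ((continuous_const.mul hPt_cont).continuousOn) (by simp)]
    refine cfcₙ_congr fun t ht => ?_
    have ht0 := hsb t ht
    rcases eq_or_lt_of_le ht0 with h0 | h0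
    · simp [hH_def, hP_def, ← h0, hε.le]
    · show P t ^ 2 / t = P t - ε * (P t / t)
      rcases le_total t ε with hte | hte
      · have hmax : P t = 0 := max_eq_right (by linarith)
        simp [hmax]
      · have hmax : P t = t - ε := max_eq_left (by linarith)
        rw [hmax]
        field_simp
  -- nonnegativity of cfcₙ H b
  have hHb0 : 0 ≤ cfcₙ H b := cfcₙ_nonneg hHnn
  -- m = c - q
  set m := c - q with hm_def
  have hm_eq : m = cfcₙ (fun t => min t ε) c := by
    rw [hm_def, hq_def]
    have : c = cfcₙ (id : ℝ → ℝ) c := (cfcₙ_id ℝ c).symm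
    nth_rewrite 1 [this]
    rw [← cfcₙ_sub _ _ c continuousOn_id rfl hPc.continuousOn hP0]
    refine cfcₙ_congr fun t ht => ?_
    show t - P t = min t ε
    rcases le_total t ε with hte | hte
    · rw [hP_def]
      simp [max_eq_right (by linarith : t - ε ≤ 0), min_eq_left hte]
    · have hmax : P t = t - ε := max_eq_left (by linarith)
      rw [hmax, min_eq_right hte]
      ring
  have hm_sa : IsSelfAdjoint m := hc_sa.sub (IsSelfAdjoint.of_nonneg hq0)
  have hm_norm : ‖m‖ ≤ ε := by
    rw [hm_eq]
    refine norm_cfcₙ_le fun t ht => ?_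
    have ht0 := hsc t ht
    rw [Real.norm_eq_abs, abs_of_nonneg (le_min ht0 hε.le)]
    exact min_le_right t ε
  -- step : cfcₙ H b ≤ r * q * r
  have hstep : cfcₙ H b ≤ r * q * r := by
    have s1 : r * b * r ≤ r * c * r := by
      have := star_left_conjugate_le_conjugate hbc r
      rwa [hr_sa] at this
    have s2 : r * m * r ≤ ‖m‖ • (r * r) := by
      have := CStarAlgebra.star_left_conjugate_le_norm_smul (a := r) (b := m) hm_sa
      rwa [hr_sa] at this
    have s3 : ‖m‖ • (r * r) ≤ ε • (r * r) := by
      have hrr : 0 ≤ r * r := by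
        nth_rewrite 1 [← hr_sa]; exact star_mul_self_nonneg r
      have h5 : 0 ≤ (ε - ‖m‖) • (r * r) := aux_smul_nonneg (by linarith) hrr
      rw [sub_smul] at h5
      exact sub_nonneg.mp h5
    have s4 : r * c * r = r * q * r + r * m * r := by
      rw [hm_def]; noncomm_ring
    have hmain : r * b * r ≤ r * q * r + ε • (r * r) := by
      rw [s4] at s1
      exact s1.trans (add_le_add_right (s2.trans s3) _)
    rw [hI3]
    calc cutdown b ε - ε • (r * r) = r * b * r - ε • (r * r) := by rw [hI1]
      _ ≤ (r * q * r + ε • (r * r)) - ε • (r * r) := sub_le_sub_right hmain _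
      _ = r * q * r := by abel
  -- (I9) CuntzLE (cutdown b ε) (cfcₙ H b)
  have hI9 : CuntzLE (cutdown b ε) (cfcₙ H b) := by
    refine cuntzLE_of_forall fun δ hδ => ?_
    obtain ⟨n, hn⟩ := exists_nat_one_div_lt hδ
    set η : ℝ := 1 / (n + 1) with hη_def
    have hη : 0 < η := by positivity
    set K : ℝ → ℝ := fun t => Real.sqrt (max (t - ε - η) 0 * t) / (t - ε) with hK_def
    have hK_cont : Continuous K := by
      rw [continuous_iff_continuousAt]
      intro t₀
      rcases lt_or_ge t₀ (ε + η) with h | h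
      · refine Filter.EventuallyEq.continuousAt (y := (0:ℝ)) ?_
        filter_upwards [Iio_mem_nhds h] with s hs
        rw [Set.mem_Iio] at hs
        simp [hK_def, max_eq_right (by linarith : s - ε - η ≤ 0)]
      · have ht0 : t₀ - ε ≠ 0 := by
          have h6 : η ≤ t₀ - ε := by linarith
          exact (lt_of_lt_of_le hη h6).ne'
        exact ContinuousAt.div (by fun_prop) (by fun_prop) ht0
    have hK0 : K 0 = 0 := by
      simp [hK_def, max_eq_right (by linarith : -ε - η ≤ 0)]
    set w := cfcₙ K b with hw_def
    have hw0 : 0 ≤ w := by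
      refine cfcₙ_nonneg fun t ht => ?_
      have ht0 := hsb t ht
      rcases le_or_gt t (ε + η) with hte | hte
      · have : max (t - ε - η) 0 = 0 := max_eq_right (by linarith)
        simp [hK_def, this]
      · exact div_nonneg (Real.sqrt_nonneg _) (by linarith)
    have hw_sa : star w = w := (IsSelfAdjoint.of_nonneg hw0).star_eq
    refine ⟨w, ?_⟩
    rw [hw_sa]
    have hwHw : w * cfcₙ H b * w = cfcₙ (fun t => max (t - ε - η) 0) b := by
      have key1 : cfcₙ (fun t => K t * H t * K t) b = cfcₙ K b * cfcₙ H b * cfcₙ K b := by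
        rw [cfcₙ_mul (fun t => K t * H t) K b ((hK_cont.mul hH_cont).continuousOn) (by simp [hK0, hH0])
            hK_cont.continuousOn hK0,
          cfcₙ_mul _ _ b hK_cont.continuousOn hK0 hH_cont.continuousOn hH0]
      rw [hw_def, ← key1]
      refine cfcₙ_congr fun t ht => ?_
      have ht0 := hsb t ht
      show K t * H t * K t = max (t - ε - η) 0
      rcases le_or_gt t (ε + η) with hte | hte
      · have hmax : max (t - ε - η) 0 = 0 := max_eq_right (by linarith)
        simp [hK_def, hmax]
      · have hmax : max (t - ε - η) 0 = t - ε - η := max_eq_left (by linarith)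
        have htpos : 0 < t := by linarith
        have htε : 0 < t - ε := by linarith
        have hPmax : P t = t - ε := max_eq_left (by linarith)
        have h7 : t - ε ≠ 0 := htε.ne'
        have h8 : t ≠ 0 := htpos.ne'
        simp only [hK_def, hH_def]
        rw [hmax, hPmax]
        field_simp
        have hsM : Real.sqrt (t - ε - η) * Real.sqrt (t - ε - η) = t - ε - η :=
          Real.mul_self_sqrt (by linarith)
        have hst : Real.sqrt t * Real.sqrt t = t := Real.mul_self_sqrt htpos.le
        have hX : Real.sqrt (t * (t - ε - η)) ^ 2 = t * (t - ε - η) :=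
          Real.sq_sqrt (by nlinarith)
        linear_combination hX
        
    rw [hwHw]
    have hdiff : cfcₙ (fun t => max (t - ε - η) 0) b - cutdown b ε
        = cfcₙ (fun t => max (t - ε - η) 0 - P t) b := by
      rw [hp_def, cfcₙ_sub _ _ b (by fun_prop)
        (by show max ((0:ℝ) - ε - η) 0 = 0
            exact max_eq_right (by linarith : (0:ℝ) - ε - η ≤ 0))
        hPc.continuousOn hP0]
    rw [hdiff]
    refine lt_of_le_of_lt (norm_cfcₙ_le fun t ht => ?_) hn
    rw [Real.norm_eq_abs]
    have : |max (t - ε - η) 0 - max (t - ε) 0| ≤ |(t - ε - η) - (t - ε)| :=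
      abs_max_sub_max_le_abs _ _ _
    calc |max (t - ε - η) 0 - P t| ≤ |(t - ε - η) - (t - ε)| := this
      _ = η := by rw [show (t - ε - η) - (t - ε) = -η by ring, abs_neg, abs_of_nonneg hη.le]
      _ ≤ 1 / (n + 1) := le_of_eq hη_def.symm
  -- (I11) CuntzLE (r * q * r) q
  have hI11 : CuntzLE (r * q * r) q := by
    refine ⟨fun _ => r, ?_⟩
    simpa [hr_sa] using tendsto_const_nhds
  exact cuntzLE_trans (cuntzLE_trans hI9 (cuntzLE_of_le hHb0 hstep)) hI11


/-- Let `A` be a C*-algebra, `ε > 0`, and let `a ∈ A` be positive with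
`‖a‖ ≤ 1`.  Then for every `y ∈ A`,
`(y y⋆ - y a y⋆ - ε)₊ ≾_A (y y⋆ - y a² y⋆ - ε)₊ ≾_A (y y⋆ - y a y⋆ - ε/2)₊`. -/
theorem cutdown_cuntzLE_sq
    (ε : ℝ) (hε : 0 < ε) (a : A) (ha : 0 ≤ a) (ha1 : ‖a‖ ≤ 1) (y : A) :
    CuntzLE (cutdown (y * star y - y * a * star y) ε)
        (cutdown (y * star y - y * (a * a) * star y) ε) ∧
      CuntzLE (cutdown (y * star y - y * (a * a) * star y) ε)
        (cutdown (y * star y - y * a * star y) (ε / 2)) := by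
  set b := y * star y - y * a * star y with hbdef
  set c := y * star y - y * (a * a) * star y with hcdef
  have ha_sa : IsSelfAdjoint a := .of_nonneg ha
  have haU : (0 : Unitization ℂ A) ≤ (a : Unitization ℂ A) := Unitization.inr_nonneg_iff.mpr ha
  have haU_sa : IsSelfAdjoint ((a : Unitization ℂ A)) := .of_nonneg haU
  have hstar : star ((a : Unitization ℂ A)) = (a : Unitization ℂ A) := haU_sa.star_eq
  have ha1U : ((a : Unitization ℂ A)) ≤ 1 := by
    rw [← CStarAlgebra.norm_le_one_iff_of_nonneg _ haU]
    rw [Unitization.norm_inr]; exact ha1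
  have haa : (0 : Unitization ℂ A) ≤ (a : Unitization ℂ A) * (a : Unitization ℂ A) := by
    nth_rewrite 1 [← hstar]; exact star_mul_self_nonneg _
  have haa1 : (a : Unitization ℂ A) * (a : Unitization ℂ A) ≤ 1 := by
    rw [← CStarAlgebra.norm_le_one_iff_of_nonneg _ haa]
    calc ‖(a : Unitization ℂ A) * (a : Unitization ℂ A)‖
        ≤ ‖(a : Unitization ℂ A)‖ * ‖(a : Unitization ℂ A)‖ := norm_mul_le _ _
      _ ≤ 1 := by rw [Unitization.norm_inr]; nlinarith [norm_nonneg a]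
  have h1a : (0 : Unitization ℂ A) ≤ 1 - (a : Unitization ℂ A) := sub_nonneg.mpr ha1U
  have hb0 : 0 ≤ b := by
    rw [← Unitization.inr_nonneg_iff]
    have hb' : ((b : A) : Unitization ℂ A)
        = (y : Unitization ℂ A) * (1 - (a : Unitization ℂ A)) * star (y : Unitization ℂ A) := by
      rw [hbdef]
      simp only [Unitization.inr_sub ℂ, Unitization.inr_mul, Unitization.inr_star]
      noncomm_ring
    rw [hb']
    exact star_right_conjugate_nonneg h1a _
  have hc0 : 0 ≤ c := by
    rw [← Unitization.inr_nonneg_iff]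
    have hc' : ((c : A) : Unitization ℂ A)
        = (y : Unitization ℂ A) * (1 - (a : Unitization ℂ A) * (a : Unitization ℂ A)) *
          star (y : Unitization ℂ A) := by
      rw [hcdef]
      simp only [Unitization.inr_sub ℂ, Unitization.inr_mul, Unitization.inr_star]
      noncomm_ring
    rw [hc']
    exact star_right_conjugate_nonneg (sub_nonneg.mpr haa1) _
  have hbc : b ≤ c := by
    rw [← sub_nonneg, ← Unitization.inr_nonneg_iff]
    have h2 : ((c - b : A) : Unitization ℂ A)
        = (y : Unitization ℂ A) *
          ((a : Unitization ℂ A) - (a : Unitization ℂ A) * (a : Unitization ℂ A)) *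
          star (y : Unitization ℂ A) := by
      rw [hcdef, hbdef]
      simp only [Unitization.inr_sub ℂ, Unitization.inr_mul, Unitization.inr_star]
      noncomm_ring
    rw [h2]
    refine star_right_conjugate_nonneg ?_ _
    have hcfc : cfc (fun u : ℝ => u - u * u) ((a : Unitization ℂ A))
        = (a : Unitization ℂ A) - (a : Unitization ℂ A) * (a : Unitization ℂ A) := by
      rw [cfc_sub (fun u : ℝ => u) (fun u : ℝ => u * u) _ (by fun_prop) (by fun_prop),
        cfc_mul (fun u : ℝ => u) (fun u : ℝ => u) _ (by fun_prop) (by fun_prop),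
        cfc_id' ℝ ((a : Unitization ℂ A))]
    rw [← hcfc]
    refine cfc_nonneg fun u hu => ?_
    have hu0 : 0 ≤ u := spectrum_nonneg_of_nonneg haU hu
    have hu1 : u ≤ 1 := by
      have h5 := spectrum.norm_le_norm_of_mem hu
      rw [Unitization.norm_inr, Real.norm_eq_abs] at h5
      have := le_abs_self u
      linarith
    nlinarith
  have hcbb : c ≤ b + b := by
    rw [← sub_nonneg, ← Unitization.inr_nonneg_iff]
    have h3 : ((b + b - c : A) : Unitization ℂ A)
        = ((y : Unitization ℂ A) * (1 - (a : Unitization ℂ A))) *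
          star ((y : Unitization ℂ A) * (1 - (a : Unitization ℂ A))) := by
      rw [hbdef, hcdef]
      simp only [Unitization.inr_sub ℂ, Unitization.inr_add ℂ, Unitization.inr_mul,
        Unitization.inr_star, star_mul, star_sub, star_one, hstar]
      noncomm_ring
    rw [h3]
    exact mul_star_self_nonneg _
  have hb_sa : IsSelfAdjoint b := .of_nonneg hb0
  have hsmul : cutdown (b + b) ε = (2:ℝ) • cutdown b (ε / 2) := by
    have h2b : cfcₙ (fun u : ℝ => u + u) b = b + b := by
      rw [cfcₙ_add (fun u : ℝ => u) (fun u : ℝ => u) b (by fun_prop) rfl (by fun_prop) rfl,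
        cfcₙ_id' ℝ b]
    rw [← h2b]
    show cfcₙ (fun t : ℝ => max (t - ε) 0) (cfcₙ (fun u : ℝ => u + u) b)
        = (2:ℝ) • cfcₙ (fun t : ℝ => max (t - ε / 2) 0) b
    rw [← cfcₙ_comp (fun t : ℝ => max (t - ε) 0) (fun u : ℝ => u + u) b
      (by fun_prop) (by show max ((0:ℝ) - ε) 0 = 0; exact max_eq_right (by linarith))
      (by fun_prop) (by show (0:ℝ) + 0 = 0; norm_num) hb_sa]
    rw [← cfcₙ_smul (2:ℝ) _ b (by fun_prop)
      (by show max ((0:ℝ) - ε / 2) 0 = 0; exact max_eq_right (by linarith))]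
    refine cfcₙ_congr fun t _ => ?_
    show max (t + t - ε) 0 = (2:ℝ) • max (t - ε / 2) 0
    rw [smul_eq_mul]
    rcases le_total t (ε / 2) with h | h
    · rw [max_eq_right (by linarith), max_eq_right (by linarith)]; ring
    · rw [max_eq_left (by linarith), max_eq_left (by linarith)]; ring
  constructor
  · exact key hε hb0 hbc
  · have h4 := key hε hc0 hcbb
    rw [hsmul] at h4
    exact cuntzLE_of_smul_two h4
end

section
/- Let A be a C*-algebra, let G be a finite group, and let α : G → Aut(A) be an action of G on A. Then the fixed point algebra A^α contains an approximate unit for A: for every finite set F ⊆ A and every ε > 0 there exists a positive element v ∈ A^α with ‖v‖ ≤ 1 such that ‖v a − a‖ < ε and ‖a v − a‖ < ε for all a ∈ F. -/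
open Filter Topology

variable {A : Type*} [NonUnitalCStarAlgebra A] [PartialOrder A] [StarOrderedRing A]

/-- Let `A` be a C*-algebra, `G` a finite group, and
`α : G → Aut(A)` an action of `G` on `A`.  Then the fixed point algebra `A^α` contains
an approximate unit for `A`: for every finite set `F ⊆ A` and every `ε > 0` there is a
positive contraction `v ∈ A^α` with `‖v * a - a‖ < ε` and `‖a * v - a‖ < ε` for all
`a ∈ F`. -/
theorem fixedPts_contains_approximate_unit
    {G : Type*} [Group G] [Fintype G]
    (α : G → A ≃⋆ₐ[ℂ] A) (hα : ∀ g h x, α (g * h) x = α g (α h x))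
    (F : Finset A) (ε : ℝ) (hε : 0 < ε) :
    ∃ v : A, v ∈ fixedPts α ∧ 0 ≤ v ∧ ‖v‖ ≤ 1 ∧
      ∀ a ∈ F, ‖v * a - a‖ < ε ∧ ‖a * v - a‖ < ε := by
  classical
  have h1 : ∀ x : A, α 1 x = x := by
    intro x
    have h := hα 1 1 x
    rw [one_mul] at h
    exact ((α 1).injective h.symm)
  have hinv : ∀ (g : G) (x : A), α g (α g⁻¹ x) = x := fun g x => by
    rw [← hα, mul_inv_cancel, h1]
  have hl := CStarAlgebra.increasingApproximateUnit A
  have key : ∀ᶠ u in CStarAlgebra.approximateUnit A,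
      (0 ≤ u ∧ ‖u‖ ≤ 1) ∧ ∀ (g : G), ∀ a ∈ F,
        ‖u * α g a - α g a‖ < ε ∧ ‖α g a * u - α g a‖ < ε := by
    refine (hl.eventually_nonneg.and hl.eventually_norm).and ?_
    rw [eventually_all]
    intro g
    rw [eventually_all_finset]
    intro a _
    have h₁ := (hl.tendsto_mul_right (α g a)) (Metric.ball_mem_nhds _ hε)
    have h₂ := (hl.tendsto_mul_left (α g a)) (Metric.ball_mem_nhds _ hε)
    filter_upwards [h₁, h₂] with u hu₁ hu₂
    constructor
    · simpa [dist_eq_norm] using hu₁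
    · simpa [dist_eq_norm] using hu₂
  haveI : (CStarAlgebra.approximateUnit A).NeBot := hl.neBot
  obtain ⟨u, ⟨hu0, hu1⟩, hu⟩ := key.exists
  set n := Fintype.card G with hn_def
  have hn : 0 < n := Fintype.card_pos
  have hn' : (0 : ℝ) < n := by exact_mod_cast hn
  refine ⟨(n : ℂ)⁻¹ • ∑ g : G, α g u, ?_, ?_, ?_, ?_⟩
  · -- fixed point
    intro h
    rw [map_smul, map_sum]
    congr 1
    exact Fintype.sum_bijective (h * ·) (Group.mulLeft_bijective h) _ _
      fun g => (hα h g u).symm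
  · -- nonneg
    have hsum : 0 ≤ ∑ g : G, α g u :=
      Finset.sum_nonneg fun g _ => map_zero (α g) ▸ OrderHomClass.mono (α g) hu0
    have : ((n : ℂ)⁻¹ : ℂ) = (((n : ℝ)⁻¹ : ℝ) : ℂ) := by push_cast; ring
    rw [this]
    norm_cast
    exact smul_nonneg (by positivity) hsum
  · -- norm ≤ 1
    rw [norm_smul]
    calc ‖(n : ℂ)⁻¹‖ * ‖∑ g : G, α g u‖
        ≤ (n : ℝ)⁻¹ * ∑ g : G, ‖α g u‖ := by
          gcongr
          · simp
          · exact norm_sum_le _ _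
      _ ≤ (n : ℝ)⁻¹ * ∑ _g : G, (1 : ℝ) := by
          gcongr with g
          rw [NonUnitalStarAlgHom.norm_map (α g) (α g).injective]
          exact hu1
      _ = 1 := by
          simp only [Finset.sum_const, Finset.card_univ, ← hn_def, nsmul_eq_mul, mul_one]
          field_simp
  · -- approximate unit property
    intro a ha
    have hterm : ∀ g : G, ‖α g u * a - a‖ < ε ∧ ‖a * α g u - a‖ < ε := by
      intro g
      have hb := hu g⁻¹ a ha
      constructor
      · have : α g u * a - a = α g (u * α g⁻¹ a - α g⁻¹ a) := by
          rw [map_sub, map_mul, hinv]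
        rw [this, NonUnitalStarAlgHom.norm_map (α g) (α g).injective]
        exact hb.1
      · have : a * α g u - a = α g (α g⁻¹ a * u - α g⁻¹ a) := by
          rw [map_sub, map_mul, hinv]
        rw [this, NonUnitalStarAlgHom.norm_map (α g) (α g).injective]
        exact hb.2
    have hsum_bound : ∀ (f : G → A), (∀ g, ‖f g‖ < ε) →
        ‖(n : ℂ)⁻¹ • ∑ g : G, f g‖ < ε := by
      intro f hf
      rw [norm_smul]
      have h₁ : ‖(n : ℂ)⁻¹‖ = (n : ℝ)⁻¹ := by simp
      rw [h₁]
      have h₂ : ‖∑ g : G, f g‖ < n * ε := by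
        calc ‖∑ g : G, f g‖ ≤ ∑ g : G, ‖f g‖ := norm_sum_le _ _
          _ < ∑ _g : G, ε := by
              refine Finset.sum_lt_sum_of_nonempty Finset.univ_nonempty fun g _ => hf g
          _ = n * ε := by simp [Finset.sum_const, Finset.card_univ, ← hn_def]
      calc (n : ℝ)⁻¹ * ‖∑ g : G, f g‖ < (n : ℝ)⁻¹ * (n * ε) := by
            exact (mul_lt_mul_iff_right₀ (by positivity)).2 h₂
        _ = ε := by field_simp
    constructor
    · have hva : (n : ℂ)⁻¹ • (∑ g : G, α g u) * a - a
          = (n : ℂ)⁻¹ • ∑ g : G, (α g u * a - a) := by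
        rw [Finset.sum_sub_distrib, smul_sub, smul_mul_assoc, Finset.sum_mul]
        congr 1
        rw [Finset.sum_const, Finset.card_univ, ← hn_def, ← Nat.cast_smul_eq_nsmul ℂ,
          smul_smul, inv_mul_cancel₀ (by exact_mod_cast hn.ne' : (n : ℂ) ≠ 0), one_smul]
      rw [hva]
      exact hsum_bound _ fun g => (hterm g).1
    · have hav : a * ((n : ℂ)⁻¹ • ∑ g : G, α g u) - a
          = (n : ℂ)⁻¹ • ∑ g : G, (a * α g u - a) := by
        rw [Finset.sum_sub_distrib, smul_sub, mul_smul_comm, Finset.mul_sum]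
        congr 1
        rw [Finset.sum_const, Finset.card_univ, ← hn_def, ← Nat.cast_smul_eq_nsmul ℂ,
          smul_smul, inv_mul_cancel₀ (by exact_mod_cast hn.ne' : (n : ℂ) ≠ 0), one_smul]
      rw [hav]
      exact hsum_bound _ fun g => (hterm g).2
end

section
/- Let A be a C*-algebra and let p be a projection in the multiplier algebra M(A) of A which is full in A, i.e., the closed linear span of {x p y : x, y ∈ A} equals A. Then for every positive element a ∈ A and every ε > 0 there exist m ∈ ℕ and a positive element b ∈ M_m(A) all of whose entries lie in the hereditary C*-subalgebra p A p = {p x p : x ∈ A} ⊆ A, such that (a − ε)₊, identified with diag((a − ε)₊, 0, …, 0) ∈ M_m(A), is Cuntz subequivalent to b in M_m(A). -/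
open Filter Topology MultiplierAlgebra

variable {A : Type*} [NonUnitalCStarAlgebra A] [PartialOrder A] [StarOrderedRing A]

/-- Cuntz subequivalence in the matrix algebra `Mₙ(A)`: there is a sequence `(w k)` of
matrices with `w k * b * (w k)⋆ → a`.  (Since all C*-norms on `Mₙ(A)` are equivalent to
the product topology, this is norm convergence.) -/
def CuntzLEM {n : ℕ} (a b : Matrix (Fin n) (Fin n) A) : Prop :=
  ∃ w : ℕ → Matrix (Fin n) (Fin n) A,
    Tendsto (fun k => w k * b * star (w k)) atTop (𝓝 a)

/-- Membership in the hereditary corner `p A p` of `A`, for a projection `p` in the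
multiplier algebra `𝓜(ℂ, A)`. -/
def InCorner (p : 𝓜(ℂ, A)) (z : A) : Prop :=
  ∃ x : A, (z : 𝓜(ℂ, A)) = p * (x : 𝓜(ℂ, A)) * p

section MultiplierHelpers

lemma eq_zero_of_forall_mul_left {v : A} (h : ∀ u : A, u * v = 0) : v = 0 := by
  have := h (star v)
  rwa [CStarRing.star_mul_self_eq_zero_iff] at this

lemma eq_zero_of_forall_mul_right {v : A} (h : ∀ u : A, v * u = 0) : v = 0 := by
  have := h (star v)
  rwa [CStarRing.mul_star_self_eq_zero_iff] at this

namespace DoubleCentralizer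

lemma fst_mul_right (T : 𝓜(ℂ, A)) (x y : A) : T.fst (x * y) = T.fst x * y := by
  rw [← sub_eq_zero]
  refine eq_zero_of_forall_mul_left fun z => ?_
  rw [mul_sub, sub_eq_zero, ← T.central z (x * y), ← mul_assoc, T.central z x, mul_assoc]

lemma snd_mul_left (T : 𝓜(ℂ, A)) (x y : A) : T.snd (x * y) = x * T.snd y := by
  rw [← sub_eq_zero]
  refine eq_zero_of_forall_mul_right fun z => ?_
  rw [sub_mul, sub_eq_zero, T.central (x * y) z, mul_assoc, ← T.central y z, ← mul_assoc]

lemma coe_fst_mul (T : 𝓜(ℂ, A)) (x : A) :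
    ((T.fst x : A) : 𝓜(ℂ, A)) = T * (x : 𝓜(ℂ, A)) := by
  refine DoubleCentralizer.ext ℂ A _ _ (Prod.ext ?_ ?_)
  · refine ContinuousLinearMap.ext fun y => ?_
    show (ContinuousLinearMap.mul ℂ A (T.fst x)) y = (T * (x : 𝓜(ℂ, A))).fst y
    rw [mul_fst]
    show T.fst x * y = T.fst ((x : 𝓜(ℂ, A)).fst y)
    rw [coe_fst]
    show T.fst x * y = T.fst (x * y)
    rw [fst_mul_right]
  · refine ContinuousLinearMap.ext fun y => ?_
    show (ContinuousLinearMap.mul ℂ A).flip (T.fst x) y = (T * (x : 𝓜(ℂ, A))).snd y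
    rw [mul_snd]
    show y * T.fst x = (x : 𝓜(ℂ, A)).snd (T.snd y)
    rw [coe_snd]
    show y * T.fst x = T.snd y * x
    exact (T.central y x).symm

lemma coe_snd_mul (T : 𝓜(ℂ, A)) (x : A) :
    ((T.snd x : A) : 𝓜(ℂ, A)) = (x : 𝓜(ℂ, A)) * T := by
  refine DoubleCentralizer.ext ℂ A _ _ (Prod.ext ?_ ?_)
  · refine ContinuousLinearMap.ext fun y => ?_
    show (ContinuousLinearMap.mul ℂ A (T.snd x)) y = ((x : 𝓜(ℂ, A)) * T).fst y
    rw [mul_fst]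
    show T.snd x * y = (x : 𝓜(ℂ, A)).fst (T.fst y)
    rw [coe_fst]
    show T.snd x * y = x * T.fst y
    exact T.central x y
  · refine ContinuousLinearMap.ext fun y => ?_
    show (ContinuousLinearMap.mul ℂ A).flip (T.snd x) y = ((x : 𝓜(ℂ, A)) * T).snd y
    rw [mul_snd]
    show y * T.snd x = T.snd ((x : 𝓜(ℂ, A)).snd y)
    rw [coe_snd]
    show y * T.snd x = T.snd (y * x)
    exact (snd_mul_left T y x).symm

lemma coe_injective' : Function.Injective ((↑) : A → 𝓜(ℂ, A)) := by
  intro a b h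
  rw [← sub_eq_zero]
  refine eq_zero_of_forall_mul_right fun u => ?_
  have h1 : (a : 𝓜(ℂ, A)).fst u = (b : 𝓜(ℂ, A)).fst u := by rw [h]
  rw [coe_fst, coe_fst] at h1
  change a * u = b * u at h1
  rw [sub_mul, h1, sub_self]

end DoubleCentralizer

end MultiplierHelpers

/-- auxiliary function for the Cuntz-type approximation -/
noncomputable def cuntzG (σ : ℝ) (t : ℝ) : ℝ :=
  Real.sqrt (max t 0) / (max t 0 + σ)

lemma cuntzG_zero (σ : ℝ) : cuntzG σ 0 = 0 := by
  simp [cuntzG]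

lemma cuntzG_continuous {σ : ℝ} (hσ : 0 < σ) : Continuous (cuntzG σ) := by
  apply Continuous.div
  · exact Real.continuous_sqrt.comp (continuous_id.max continuous_const)
  · exact (continuous_id.max continuous_const).add continuous_const
  · intro t
    have : 0 ≤ max t 0 := le_max_right _ _
    positivity

lemma cuntzG_sq {σ : ℝ} (hσ : 0 < σ) {t : ℝ} (ht : 0 ≤ t) :
    cuntzG σ t * t * cuntzG σ t = t * t / (t + σ)^2 := by
  rw [cuntzG, max_eq_left ht]
  have h : Real.sqrt t / (t + σ) * t * (Real.sqrt t / (t + σ))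
      = (Real.sqrt t * Real.sqrt t) * t / (t + σ) / (t + σ) := by ring
  rw [h, Real.mul_self_sqrt ht, div_div, ← sq (t + σ)]

lemma cuntzG_psi_le_one {σ : ℝ} (hσ : 0 < σ) (t : ℝ) :
    cuntzG σ t * t * cuntzG σ t ≤ 1 := by
  rcases le_total t 0 with ht | ht
  · rw [cuntzG, max_eq_right ht]
    simp
  · rw [cuntzG_sq hσ ht, div_le_one (by positivity)]
    nlinarith [mul_nonneg ht hσ.le, sq_nonneg σ]

lemma cuntzG_key_bound {σ : ℝ} (hσ : 0 < σ) {t : ℝ} (ht : 0 ≤ t) :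
    (1 - cuntzG σ t * t * cuntzG σ t) * t ≤ 3 * σ := by
  have hs : (0:ℝ) < t + σ := by positivity
  rw [cuntzG_sq hσ ht]
  have h2 : (1 - t * t / (t + σ)^2) * t = (t * (t + σ)^2 - t * t * t) / (t + σ)^2 := by
    field_simp
  rw [h2, div_le_iff₀ (by positivity)]
  nlinarith [mul_nonneg (mul_nonneg hσ.le ht) ht, mul_nonneg (mul_nonneg hσ.le hσ.le) ht,
    mul_nonneg (mul_nonneg hσ.le hσ.le) hσ.le]

section Unital

variable {B : Type*} [CStarAlgebra B] [PartialOrder B] [StarOrderedRing B]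

lemma unital_cuntz_estimate {e x r : B} (he : 0 ≤ e) (hx : 0 ≤ x) (hex : e ≤ x)
    (hr : IsSelfAdjoint r) (hre : r * r = e) {σ : ℝ} (hσ : 0 < σ) :
    ‖r * (cfc (cuntzG σ) x * x * cfc (cuntzG σ) x) * r - e‖ ≤ 3 * σ := by
  have hxsa : IsSelfAdjoint x := .of_nonneg hx
  have hGc : Continuous (cuntzG σ) := cuntzG_continuous hσ
  set ψ : ℝ → ℝ := fun t => cuntzG σ t * t * cuntzG σ t with hψ
  set θ : ℝ → ℝ := fun t => 1 - ψ t with hθ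
  have hθ0 : ∀ t, 0 ≤ θ t := fun t => sub_nonneg.mpr (cuntzG_psi_le_one hσ t)
  have hψc : Continuous ψ := by fun_prop
  have hθc : Continuous θ := by fun_prop
  -- G x G = cfc ψ x
  have h1 : cfc ψ x = cfc (cuntzG σ) x * x * cfc (cuntzG σ) x := by
    calc cfc ψ x = cfc (fun t => cuntzG σ t * (t * cuntzG σ t)) x :=
          cfc_congr fun t _ => by simp only [hψ]; ring
      _ = cfc (cuntzG σ) x * cfc (fun t : ℝ => t * cuntzG σ t) x :=
          cfc_mul _ _ x hGc.continuousOn (by fun_prop)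
      _ = cfc (cuntzG σ) x * (cfc (fun t : ℝ => t) x * cfc (cuntzG σ) x) := by
          rw [cfc_mul (fun t : ℝ => t) (cuntzG σ) x continuousOn_id hGc.continuousOn]
      _ = cfc (cuntzG σ) x * x * cfc (cuntzG σ) x := by
          rw [cfc_id' ℝ x hxsa, mul_assoc]
  -- r * cfc θ x * r = e - r * cfc ψ x * r
  have h2 : r * cfc θ x * r = e - r * cfc ψ x * r := by
    have hsub : cfc θ x = 1 - cfc ψ x := by
      calc cfc θ x = cfc (fun t : ℝ => 1) x - cfc ψ x :=
            cfc_sub (fun _ : ℝ => 1) ψ x continuousOn_const hψc.continuousOn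
        _ = 1 - cfc ψ x := by rw [cfc_const_one ℝ x hxsa]
    rw [hsub, mul_sub, sub_mul, mul_one, hre]
  -- the square root ρ of cfc θ x
  set ρ : B := cfc (fun t => Real.sqrt (θ t)) x with hρ
  have hρsa : IsSelfAdjoint ρ := cfc_predicate _ x
  have hρsq : ρ * ρ = cfc θ x := by
    rw [hρ, ← cfc_mul _ _ x (by fun_prop) (by fun_prop)]
    exact cfc_congr fun t _ => Real.mul_self_sqrt (hθ0 t)
  -- norm equalities
  have key : ‖r * cfc θ x * r‖ ≤ 3 * σ := by
    have e1 : r * cfc θ x * r = star (ρ * r) * (ρ * r) := by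
      rw [star_mul, hρsa.star_eq, hr.star_eq, ← hρsq]
      noncomm_ring
    have e2 : (ρ * r) * star (ρ * r) = ρ * e * ρ := by
      rw [star_mul, hρsa.star_eq, hr.star_eq, ← hre]
      noncomm_ring
    have e3 : ‖r * cfc θ x * r‖ = ‖ρ * e * ρ‖ := by
      rw [e1, ← e2, CStarRing.norm_star_mul_self, CStarRing.norm_self_mul_star]
    rw [e3]
    have h4 : ρ * e * ρ ≤ ρ * x * ρ := hρsa.conjugate_le_conjugate hex
    have h5 : 0 ≤ ρ * e * ρ := by
      have := star_left_conjugate_nonneg he ρ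
      rwa [hρsa.star_eq] at this
    refine (CStarAlgebra.norm_le_norm_of_nonneg_of_le h5 h4).trans ?_
    have h6 : ρ * x * ρ = cfc (fun t => θ t * t) x := by
      calc ρ * x * ρ = cfc (fun t => Real.sqrt (θ t)) x * (cfc (fun t : ℝ => t) x *
              cfc (fun t => Real.sqrt (θ t)) x) := by rw [cfc_id' ℝ x hxsa, mul_assoc]
        _ = cfc (fun t => Real.sqrt (θ t)) x * cfc (fun t => t * Real.sqrt (θ t)) x := by
              rw [cfc_mul (fun t : ℝ => t) (fun t => Real.sqrt (θ t)) x continuousOn_id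
                (by fun_prop)]
        _ = cfc (fun t => Real.sqrt (θ t) * (t * Real.sqrt (θ t))) x :=
              (cfc_mul (fun t => Real.sqrt (θ t)) (fun t => t * Real.sqrt (θ t)) x
                (by fun_prop) (by fun_prop)).symm
        _ = cfc (fun t => θ t * t) x := by
              refine cfc_congr fun t _ => ?_
              have : Real.sqrt (θ t) * (t * Real.sqrt (θ t))
                  = (Real.sqrt (θ t) * Real.sqrt (θ t)) * t := by ring
              rw [this, Real.mul_self_sqrt (hθ0 t)]
    rw [h6]
    refine norm_cfc_le (by positivity) fun t ht => ?_
    have ht0 : 0 ≤ t := spectrum_nonneg_of_nonneg hx ht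
    rw [Real.norm_eq_abs, abs_of_nonneg (mul_nonneg (hθ0 t) ht0)]
    calc θ t * t = (1 - ψ t) * t := rfl
      _ ≤ 3 * σ := cuntzG_key_bound hσ ht0
  calc ‖r * (cfc (cuntzG σ) x * x * cfc (cuntzG σ) x) * r - e‖
      = ‖r * cfc θ x * r‖ := by rw [← h1, h2, norm_sub_rev]
    _ ≤ 3 * σ := key

end Unital

lemma nonunital_cuntz_estimate {e x r : A} (he : 0 ≤ e) (hx : 0 ≤ x) (hex : e ≤ x)
    (hr : IsSelfAdjoint r) (hre : r * r = e) {σ : ℝ} (hσ : 0 < σ) :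
    ‖r * (cfcₙ (cuntzG σ) x * x * cfcₙ (cuntzG σ) x) * r - e‖ ≤ 3 * σ := by
  have hcfc : ((cfcₙ (cuntzG σ) x : A) : Unitization ℂ A)
      = cfc (cuntzG σ) (x : Unitization ℂ A) :=
    Unitization.real_cfcₙ_eq_cfc_inr x (cuntzG σ) (cuntzG_zero σ)
  rw [← Unitization.norm_inr (𝕜 := ℂ)
    (r * (cfcₙ (cuntzG σ) x * x * cfcₙ (cuntzG σ) x) * r - e)]
  rw [Unitization.inr_sub ℂ, Unitization.inr_mul ℂ, Unitization.inr_mul ℂ,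
    Unitization.inr_mul ℂ, Unitization.inr_mul ℂ, hcfc]
  refine unital_cuntz_estimate ?_ ?_ ?_ ?_ ?_ hσ
  · exact Unitization.inr_nonneg_iff.mpr he
  · exact Unitization.inr_nonneg_iff.mpr hx
  · exact (Unitization.inr_le_iff e x (.of_nonneg he) (.of_nonneg hx)).mpr hex
  · exact (Unitization.isSelfAdjoint_inr (R := ℂ)).mpr hr
  · rw [← Unitization.inr_mul ℂ, hre]


lemma core_sequence (a : A) (ha : 0 ≤ a) (ε : ℝ) (hε : 0 < ε) (z : A)
    (hq : ‖cfcₙ (fun t : ℝ => max (t - ε/2) 0) a - star z * z‖ ≤ ε/4) :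
    ∃ u : ℕ → A, Tendsto (fun n => u n * (star z * z) * star (u n)) atTop
      (𝓝 (cfcₙ (fun t : ℝ => max (t - ε) 0) a)) := by
  set cc := star z * z with hcc
  set f1 : ℝ → ℝ := fun t => max (t - ε) 0 with hf1
  set f2 : ℝ → ℝ := fun t => max (t - ε/2) 0 with hf2
  set φ : ℝ → ℝ := fun t => Real.sqrt (max (t - ε) 0 / max (t - 3*ε/4) (ε/4)) with hφ
  -- continuity and values at zero
  have hf1c : Continuous f1 := by fun_prop
  have hf2c : Continuous f2 := by fun_prop
  have hf1_0 : f1 0 = 0 := by simp [hf1]; linarith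
  have hf2_0 : f2 0 = 0 := by simp [hf2]; linarith
  have hf1nn : ∀ t, 0 ≤ f1 t := fun t => le_max_right _ _
  have hdenpos : ∀ t : ℝ, 0 < max (t - 3*ε/4) (ε/4) :=
    fun t => lt_of_lt_of_le (by positivity) (le_max_right _ _)
  have hφc : Continuous φ := by
    apply Real.continuous_sqrt.comp
    apply Continuous.div (by fun_prop) (by fun_prop)
    exact fun t => (hdenpos t).ne'
  have hφ_0 : φ 0 = 0 := by
    simp only [hφ]
    rw [max_eq_right (by linarith), zero_div, Real.sqrt_zero]
  have hφφ : ∀ t, φ t * φ t = f1 t / max (t - 3*ε/4) (ε/4) := fun t =>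
    Real.mul_self_sqrt (div_nonneg (hf1nn t) (hdenpos t).le)
  -- the elements
  set e : A := cfcₙ f1 a with he_def
  set q : A := cfcₙ f2 a with hq_def
  set d : A := cfcₙ φ a with hd_def
  set r : A := cfcₙ (fun t => Real.sqrt (f1 t)) a with hr_def
  set x : A := d * cc * d with hx_def
  have hasa : IsSelfAdjoint a := .of_nonneg ha
  have hesa : IsSelfAdjoint e := cfcₙ_predicate f1 a
  have hqsa : IsSelfAdjoint q := cfcₙ_predicate f2 a
  have hdsa : IsSelfAdjoint d := cfcₙ_predicate φ a
  have hrsa : IsSelfAdjoint r := cfcₙ_predicate _ a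
  have hccsa : IsSelfAdjoint cc := by
    rw [hcc]; exact IsSelfAdjoint.star_mul_self z
  have he0 : 0 ≤ e := cfcₙ_nonneg fun t _ => hf1nn t
  have hrr : r * r = e := by
    calc r * r = cfcₙ (fun t => Real.sqrt (f1 t) * Real.sqrt (f1 t)) a :=
          (cfcₙ_mul _ _ a (by fun_prop) (by simp [hf1_0]) (by fun_prop) (by simp [hf1_0])).symm
      _ = e := cfcₙ_congr fun t _ => Real.mul_self_sqrt (hf1nn t)
  -- Claim A : d * q * d = e + (ε/4) • (d * d)
  have claimA : d * q * d = e + (ε/4) • (d * d) := by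
    have lhs : d * q * d = cfcₙ (fun t => φ t * (f2 t * φ t)) a := by
      calc d * q * d = d * (q * d) := by rw [mul_assoc]
        _ = d * cfcₙ (fun t => f2 t * φ t) a := by
            rw [cfcₙ_mul f2 φ a hf2c.continuousOn (by simp [hf2_0]) hφc.continuousOn
              (by simp [hφ_0])]
        _ = cfcₙ (fun t => φ t * (f2 t * φ t)) a := by
            rw [cfcₙ_mul φ (fun t => f2 t * φ t) a hφc.continuousOn (by simp [hφ_0])
              (by fun_prop) (by simp [hf2_0, hφ_0])]
    have rhs : e + (ε/4) • (d * d) = cfcₙ (fun t => f1 t + ε/4 * (φ t * φ t)) a := by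
      have h1 : d * d = cfcₙ (fun t => φ t * φ t) a :=
        (cfcₙ_mul φ φ a hφc.continuousOn (by simp [hφ_0]) hφc.continuousOn
          (by simp [hφ_0])).symm
      have h2 : (ε/4) • (d * d) = cfcₙ (fun t => ε/4 * (φ t * φ t)) a := by
        rw [h1, ← cfcₙ_const_mul (ε/4) (fun t => φ t * φ t) a (by fun_prop)
          (by simp [hφ_0])]
      rw [h2, he_def,
        ← cfcₙ_add (R := ℝ) f1 (fun t => ε/4 * (φ t * φ t)) a hf1c.continuousOn
          (by simp [hf1_0]) (by fun_prop) (by simp [hφ_0])]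
    rw [lhs, rhs]
    refine cfcₙ_congr fun t _ => ?_
    show φ t * (f2 t * φ t) = f1 t + ε/4 * (φ t * φ t)
    rcases le_total t ε with ht | ht
    · have hφt : φ t = 0 := by
        simp only [hφ]
        rw [max_eq_right (by linarith), zero_div, Real.sqrt_zero]
      have hf1t : f1 t = 0 := max_eq_right (by linarith)
      rw [hφt, hf1t]
      ring
    · have hden : max (t - 3*ε/4) (ε/4) = t - 3*ε/4 := max_eq_left (by linarith)
      have hdpos : (0:ℝ) < t - 3*ε/4 := by linarith
      have hf1t : f1 t = t - ε := max_eq_left (by linarith)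
      have hf2t : f2 t = t - ε/2 := max_eq_left (by linarith)
      have hswap : φ t * (f2 t * φ t) = (φ t * φ t) * f2 t := by ring
      rw [hswap, hφφ t, hden, hf1t, hf2t]
      have hu : t - 3*ε/4 ≠ 0 := hdpos.ne'
      have hc : (t-ε)/(t-3*ε/4) * (t-3*ε/4) = t - ε := div_mul_cancel₀ _ hu
      refine mul_right_cancel₀ hu ?_
      rw [add_mul, mul_assoc (ε/4), hc]
      calc (t-ε)/(t-3*ε/4) * (t-ε/2) * (t-3*ε/4)
          = (t-ε)/(t-3*ε/4) * (t-3*ε/4) * (t-ε/2) := by ring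
        _ = (t-ε) * (t-ε/2) := by rw [hc]
        _ = (t-ε) * (t-3*ε/4) + ε/4 * (t-ε) := by ring
  -- Claim B : e ≤ x
  have hx0 : 0 ≤ x := by
    have : x = star (z * d) * (z * d) := by
      rw [hx_def, hcc, star_mul, hdsa.star_eq]
      noncomm_ring
    rw [this]
    exact star_mul_self_nonneg _
  have claimB : e ≤ x := by
    have key : d * q * d ≤ x + (ε/4) • (d * d) := by
      set B := Unitization ℂ A
      have hsub_sa : IsSelfAdjoint (q - cc) := hqsa.sub hccsa
      have hsub_sa' : IsSelfAdjoint ((q - cc : A) : B) :=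
        (Unitization.isSelfAdjoint_inr (R := ℂ)).mpr hsub_sa
      have hstep1 : ((q - cc : A) : B) ≤ algebraMap ℝ B (ε/4) := by
        refine le_algebraMap_of_spectrum_le (fun t ht => ?_) hsub_sa'
        have h1 : t ≤ ‖((q - cc : A) : B)‖ :=
          (Real.le_norm_self t).trans (spectrum.norm_le_norm_of_mem ht)
        rw [Unitization.norm_inr] at h1
        linarith
      have hd' : IsSelfAdjoint ((d : A) : B) :=
        (Unitization.isSelfAdjoint_inr (R := ℂ)).mpr hdsa
      have hconj : ((d : A) : B) * ((q - cc : A) : B) * ((d : A) : B)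
          ≤ ((d : A) : B) * algebraMap ℝ B (ε/4) * ((d : A) : B) :=
        hd'.conjugate_le_conjugate hstep1
      have hRHS : ((d : A) : B) * algebraMap ℝ B (ε/4) * ((d : A) : B)
          = ((((ε/4) • (d * d) : A)) : B) := by
        rw [show ((d : A) : B) * algebraMap ℝ B (ε/4) = algebraMap ℝ B (ε/4) * ((d : A) : B)
            from (Algebra.commutes _ _).symm, mul_assoc, ← Algebra.smul_def,
          ← Unitization.inr_mul ℂ, ← Unitization.inr_smul ℂ]
      have hLHS : ((d : A) : B) * ((q - cc : A) : B) * ((d : A) : B)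
          = ((d * q * d : A) : B) - ((d * cc * d : A) : B) := by
        rw [Unitization.inr_sub ℂ q cc, mul_sub, sub_mul, ← Unitization.inr_mul ℂ,
          ← Unitization.inr_mul ℂ, ← Unitization.inr_mul ℂ, ← Unitization.inr_mul ℂ]
      have hfinal : ((d * q * d : A) : B) ≤ ((x + (ε/4) • (d * d) : A) : B) := by
        rw [hLHS, hRHS] at hconj
        rw [Unitization.inr_add ℂ]
        rw [sub_le_iff_le_add] at hconj
        calc ((d * q * d : A) : B) ≤ (((ε/4) • (d * d) : A) : B) + ((d * cc * d : A) : B) :=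
              hconj
          _ = ((x : A) : B) + ((((ε/4) • (d * d) : A)) : B) := by rw [add_comm]
      have sa1 : IsSelfAdjoint (d * q * d) := by
        rw [IsSelfAdjoint]
        simp only [star_mul, hdsa.star_eq, hqsa.star_eq, mul_assoc]
      have sa2 : IsSelfAdjoint (x + (ε/4) • (d * d)) := by
        rw [IsSelfAdjoint]
        simp only [star_add, star_smul, star_trivial, star_mul, hdsa.star_eq,
          (IsSelfAdjoint.of_nonneg hx0).star_eq]
      exact (Unitization.inr_le_iff _ _ sa1 sa2).mp hfinal
    have := claimA ▸ key
    exact le_of_add_le_add_right this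
  -- the sequence
  refine ⟨fun n => r * cfcₙ (cuntzG (1/(n+1))) x * d, ?_⟩
  have hest : ∀ n : ℕ, ‖(r * cfcₙ (cuntzG (1/(n+1))) x * d) * cc *
      star (r * cfcₙ (cuntzG (1/(n+1))) x * d) - e‖ ≤ 3 * (1/(n+1)) := by
    intro n
    have hσ : (0:ℝ) < 1/(n+1) := by positivity
    have hGsa : IsSelfAdjoint (cfcₙ (cuntzG (1/(n+1))) x) := cfcₙ_predicate _ x
    have hstar : star (r * cfcₙ (cuntzG (1/(n+1))) x * d)
        = d * cfcₙ (cuntzG (1/(n+1))) x * r := by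
      simp only [star_mul, hdsa.star_eq, hrsa.star_eq, hGsa.star_eq, mul_assoc]
    rw [hstar]
    have hassoc : (r * cfcₙ (cuntzG (1/(n+1))) x * d) * cc *
        (d * cfcₙ (cuntzG (1/(n+1))) x * r)
        = r * (cfcₙ (cuntzG (1/(n+1))) x * x * cfcₙ (cuntzG (1/(n+1))) x) * r := by
      rw [hx_def]
      simp only [mul_assoc]
    rw [hassoc]
    exact nonunital_cuntz_estimate he0 hx0 claimB hrsa hrr hσ
  rw [show 𝓝 e = 𝓝 e from rfl]
  have h0 : Tendsto (fun n : ℕ => 3 * (1/((n:ℝ)+1))) atTop (𝓝 0) := by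
    have := tendsto_one_div_add_atTop_nhds_zero_nat (𝕜 := ℝ)
    simpa using this.const_mul 3
  have : Tendsto (fun n : ℕ => (r * cfcₙ (cuntzG (1/(n+1))) x * d) * cc *
      star (r * cfcₙ (cuntzG (1/(n+1))) x * d) - e) atTop (𝓝 0) :=
    squeeze_zero_norm (a := fun n : ℕ => 3 * (1/((n:ℝ)+1))) hest h0
  simpa using this.add_const e



/-- Let `p` be a full projection in the multiplier algebra of `A`,
i.e. the closed linear span of `{x p y : x, y ∈ A}` is all of `A`.  Then for every
positive `a ∈ A` and every `ε > 0` there are `m ≥ 1` and a positive matrix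
`b ∈ M_m(A)` all of whose entries lie in the corner `p A p`, such that
`diag((a - ε)₊, 0, …, 0) ≾ b` in `M_m(A)`. -/
theorem cutdown_cuntzLE_matrix_over_corner
    (p : 𝓜(ℂ, A)) (hp_star : star p = p) (hp_idem : p * p = p)
    (hfull : closure (Submodule.span ℂ
        {z : A | ∃ x y : A,
          (z : 𝓜(ℂ, A)) = (x : 𝓜(ℂ, A)) * p * (y : 𝓜(ℂ, A))} : Set A) = Set.univ)
    (a : A) (ha : 0 ≤ a) (ε : ℝ) (hε : 0 < ε) :
    ∃ (m : ℕ) (b : Matrix (Fin (m + 1)) (Fin (m + 1)) A),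
      (∃ v : Matrix (Fin (m + 1)) (Fin (m + 1)) A, b = star v * v) ∧
      (∀ i j, InCorner p (b i j)) ∧
      CuntzLEM (Matrix.diagonal fun i => if i = 0 then cutdown a ε else 0) b := by
  classical
  set S : Set A := {z : A | ∃ x y : A,
    (z : 𝓜(ℂ, A)) = (x : 𝓜(ℂ, A)) * p * (y : 𝓜(ℂ, A))} with hS
  set J : A →⋆ₙₐ[ℂ] 𝓜(ℂ, A) := DoubleCentralizer.coeHom (𝕜 := ℂ) (A := A) with hJ_def
  have hJ : ∀ x : A, (x : 𝓜(ℂ, A)) = J x := fun _ => rfl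
  -- the square root g of q
  set f2 : ℝ → ℝ := fun t => max (t - ε/2) 0 with hf2
  have hf2nn : ∀ t, 0 ≤ f2 t := fun t => le_max_right _ _
  have hf2_0 : f2 0 = 0 := by simp [hf2]; linarith
  set q : A := cfcₙ f2 a with hq_def
  set g : A := cfcₙ (fun t => Real.sqrt (f2 t)) a with hg_def
  have hgsa : IsSelfAdjoint g := cfcₙ_predicate _ a
  have hgq : star g * g = q := by
    rw [hgsa.star_eq]
    calc g * g = cfcₙ (fun t => Real.sqrt (f2 t) * Real.sqrt (f2 t)) a :=
          (cfcₙ_mul _ _ a (by fun_prop) (by simp [hf2_0]) (by fun_prop)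
            (by simp [hf2_0])).symm
      _ = q := cfcₙ_congr fun t _ => Real.mul_self_sqrt (hf2nn t)
  -- choose an approximation z from the span
  set δ : ℝ := min 1 (ε/(4*(2*‖g‖+1))) with hδ_def
  have hδpos : 0 < δ := lt_min one_pos (by positivity)
  have hgmem : g ∈ closure (Submodule.span ℂ S : Set A) := by rw [hfull]; trivial
  obtain ⟨z, hz_mem, hz_dist⟩ := Metric.mem_closure_iff.mp hgmem δ hδpos
  have hz_norm : ‖g - z‖ < δ := by rwa [dist_eq_norm] at hz_dist
  have hz_span : z ∈ Submodule.span ℂ S := hz_mem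
  -- the key norm estimate
  have hqz : ‖q - star z * z‖ ≤ ε/4 := by
    have hz_le : ‖z‖ ≤ ‖g‖ + 1 := by
      have h1 : ‖z‖ ≤ ‖g‖ + ‖g - z‖ := by
        calc ‖z‖ = ‖g - (g - z)‖ := by rw [sub_sub_cancel]
          _ ≤ ‖g‖ + ‖g - z‖ := norm_sub_le _ _
      linarith [hz_norm, hδpos, min_le_left (1:ℝ) (ε/(4*(2*‖g‖+1)))]
    have hsplit : q - star z * z = star g * (g - z) + star (g - z) * z := by
      rw [← hgq, star_sub]
      noncomm_ring
    have hb1 : ‖star g * (g - z)‖ ≤ ‖g‖ * δ := by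
      calc ‖star g * (g - z)‖ ≤ ‖star g‖ * ‖g - z‖ := norm_mul_le _ _
        _ ≤ ‖g‖ * δ := by rw [norm_star]; exact mul_le_mul_of_nonneg_left hz_norm.le (norm_nonneg g)
    have hb2 : ‖star (g - z) * z‖ ≤ δ * (‖g‖ + 1) := by
      calc ‖star (g - z) * z‖ ≤ ‖star (g - z)‖ * ‖z‖ := norm_mul_le _ _
        _ ≤ δ * (‖g‖ + 1) := by
            rw [norm_star]
            exact mul_le_mul hz_norm.le hz_le (norm_nonneg z) hδpos.le
    have htot : ‖q - star z * z‖ ≤ δ * (2*‖g‖+1) := by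
      calc ‖q - star z * z‖ ≤ ‖star g * (g - z)‖ + ‖star (g - z) * z‖ := by
            rw [hsplit]; exact norm_add_le _ _
        _ ≤ ‖g‖ * δ + δ * (‖g‖ + 1) := add_le_add hb1 hb2
        _ = δ * (2*‖g‖+1) := by ring
    have hδ2 : δ ≤ ε/(4*(2*‖g‖+1)) := min_le_right _ _
    have hpos : (0:ℝ) < 2*‖g‖+1 := by positivity
    have : δ * (2*‖g‖+1) ≤ ε/4 := by
      rw [div_mul_eq_div_div] at hδ2
      calc δ * (2*‖g‖+1) ≤ (ε/4/(2*‖g‖+1)) * (2*‖g‖+1) :=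
            mul_le_mul_of_nonneg_right hδ2 hpos.le
        _ = ε/4 := div_mul_cancel₀ _ hpos.ne'
    linarith
  -- the approximating sequence
  obtain ⟨u, hu⟩ := core_sequence a ha ε hε z hqz
  -- representation of z as a finite combination
  obtain ⟨n, f, gg, hsum⟩ := Submodule.mem_span_set'.mp hz_span
  set T : Fin (n+1) → A := fun j => Fin.cases 0 (fun i => f i • (gg i : A)) j with hT_def
  have hsumT : ∑ j, T j = z := by
    rw [Fin.sum_univ_succ]
    simp only [hT_def, Fin.cases_zero, Fin.cases_succ, zero_add]
    exact hsum
  have hXY : ∀ j : Fin (n+1), ∃ xj yj : A,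
      ((T j : A) : 𝓜(ℂ, A)) = (xj : 𝓜(ℂ, A)) * p * (yj : 𝓜(ℂ, A)) := by
    intro j
    induction j using Fin.cases with
    | zero =>
      refine ⟨0, 0, ?_⟩
      simp only [hJ]
      simp only [hT_def, Fin.cases_zero, map_zero, zero_mul]
    | succ i =>
      obtain ⟨x, y, hxy⟩ := (gg i).2
      refine ⟨f i • x, y, ?_⟩
      simp only [hJ] at hxy ⊢
      simp only [hT_def, Fin.cases_succ, map_smul, hxy, smul_mul_assoc]
  choose X Y hXY using hXY
  -- the A-elements X j ⋆ p
  set PX : Fin (n+1) → A := fun j => p.snd (X j) with hPX_def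
  have hPX : ∀ j, ((PX j : A) : 𝓜(ℂ, A)) = (X j : 𝓜(ℂ, A)) * p :=
    fun j => DoubleCentralizer.coe_snd_mul p (X j)
  have hPXY : ∀ j, PX j * Y j = T j := by
    intro j
    apply DoubleCentralizer.coe_injective'
    rw [hJ, map_mul, ← hJ, ← hJ, hPX j, hXY j]
  -- the matrices
  set E : A → Matrix (Fin (n+1)) (Fin (n+1)) A := fun w => Matrix.single 0 0 w
    with hE_def
  have hEmul : ∀ w w' : A, E w * E w' = E (w * w') := fun w w' =>
    Matrix.single_mul_single_same (c := w) (0 : Fin (n+1)) (0 : Fin (n+1))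
      (0 : Fin (n+1)) w'
  have hEstar : ∀ w : A, star (E w) = E (star w) := by
    intro w
    ext i j
    simp only [hE_def, Matrix.star_apply, Matrix.single, Matrix.of_apply,
      apply_ite (star : A → A), star_zero]
    by_cases h1 : (0 : Fin (n+1)) = i <;> by_cases h2 : (0 : Fin (n+1)) = j <;>
      simp [h1, h2]
  set v : Matrix (Fin (n+1)) (Fin (n+1)) A :=
    Matrix.of fun i j => if i = 0 then PX j else 0 with hv_def
  set Z : Matrix (Fin (n+1)) (Fin (n+1)) A :=
    Matrix.of fun j i => if i = 0 then Y j else 0 with hZ_def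
  refine ⟨n, star v * v, ⟨v, rfl⟩, ?_, ?_⟩

  · -- entries lie in the corner
    intro i j
    have hbij : (star v * v) i j = star (PX i) * PX j := by
      rw [Matrix.mul_apply]
      rw [Finset.sum_eq_single 0]
      · simp [hv_def, Matrix.star_apply]
      · intro k _ hk
        simp [hv_def, Matrix.star_apply, hk]
      · simp
    refine ⟨star (X i) * X j, ?_⟩
    rw [hbij, hJ, map_mul, map_star, ← hJ, ← hJ, hPX i, hPX j, hJ (star (X i) * X j),
      map_mul, map_star, ← hJ, ← hJ, star_mul, hp_star]
    rfl
  · -- the Cuntz subequivalence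
    have hvZ : v * Z = E z := by
      ext i k
      rw [Matrix.mul_apply]
      simp only [hv_def, hZ_def, Matrix.of_apply, hE_def, Matrix.single]
      by_cases hi : i = 0 <;> by_cases hk : k = 0
      · subst hi; subst hk
        simp only [if_pos rfl, and_self]
        calc ∑ j, PX j * Y j = ∑ j, T j := Finset.sum_congr rfl fun j _ => hPXY j
          _ = z := hsumT
      · subst hi
        simp [hk, eq_comm]
      · subst hk
        simp [hi, eq_comm]
      · simp [hi, hk, eq_comm]
    have hZbZ : star Z * (star v * v) * Z = E (star z * z) := by
      have h1 : star Z * (star v * v) * Z = star (v * Z) * (v * Z) := by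
        rw [star_mul]
        noncomm_ring
      rw [h1, hvZ, hEstar, hEmul]
    set W : ℕ → Matrix (Fin (n+1)) (Fin (n+1)) A := fun k => E (u k) * star Z with hW_def
    have hW : ∀ k, W k * (star v * v) * star (W k)
        = E (u k * (star z * z) * star (u k)) := by
      intro k
      have hstarW : star (W k) = Z * E (star (u k)) := by
        rw [hW_def]
        simp only [star_mul, star_star, hEstar]
      rw [hstarW, hW_def]
      calc E (u k) * star Z * (star v * v) * (Z * E (star (u k)))
          = E (u k) * (star Z * (star v * v) * Z) * E (star (u k)) := by
            simp only [mul_assoc]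
        _ = E (u k) * E (star z * z) * E (star (u k)) := by rw [hZbZ]
        _ = E (u k * (star z * z) * star (u k)) := by rw [hEmul, hEmul]
    have hdiag : (Matrix.diagonal fun i : Fin (n+1) => if i = 0 then cutdown a ε else 0)
        = E (cutdown a ε) := by
      ext i j
      by_cases hij : i = j
      · subst hij
        by_cases hi : i = 0 <;>
          simp [Matrix.diagonal_apply, hE_def, Matrix.single, hi, eq_comm]
      · simp only [Matrix.diagonal_apply, hE_def, Matrix.single, Matrix.of_apply,
          if_neg hij]
        rw [if_neg]
        rintro ⟨h1, h2⟩
        exact hij (h1.symm.trans h2)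
    refine ⟨W, ?_⟩
    have hfun : (fun k => W k * (star v * v) * star (W k))
        = fun k => E (u k * (star z * z) * star (u k)) := funext hW
    rw [hfun, hdiag]
    have hcut : cutdown a ε = cfcₙ (fun t : ℝ => max (t - ε) 0) a := rfl
    rw [hcut]
    refine tendsto_pi_nhds.mpr fun i => tendsto_pi_nhds.mpr fun j => ?_
    by_cases hij : (0 : Fin (n+1)) = i ∧ (0 : Fin (n+1)) = j
    · simp only [hE_def, Matrix.single, Matrix.of_apply, if_pos hij]
      exact hu
    · simp only [hE_def, Matrix.single, Matrix.of_apply, if_neg hij]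
      exact tendsto_const_nhds
end
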